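/- One-shot Berger–Tung achievability: Let q_{S₁S₂} be a pmf on finite sets 𝒮₁ × 𝒮₂, let d_k : 𝒮_k × Ŝ_k → [0,∞) be distortion measures and D₁, D₂ ≥ 0 distortion levels. For any conditional pmfs q_{U₁|S₁}, q_{U₂|S₂} to finite sets 𝒰₁, 𝒰₂, any reconstruction functions ŝ_k : 𝒰₁ × 𝒰₂ → Ŝ_k (k = 1,2), and any integers J₁ ≥ M₁ ≥ 1 and J₂ ≥ M₂ ≥ 1, define q(s₁,s₂,u₁,u₂) = q(s₁,s₂)·q(u₁|s₁)·q(u₂|s₂). Then there exists an (M₁,M₂)-code whose probability of no-excess distortion satisfies P[ d₁(S₁,Ŝ₁) ≤ D₁ and d₂(S₂,Ŝ₂) ≤ D₂ ] ≥ E_q [ 1{ d₁(S₁, ŝ₁(U₁,U₂)) ≤ D₁ and d₂(S₂, ŝ₂(U₁,U₂)) ≤ D₂ } / ( (1 + J₁^{−1}·2^{i_q(S₁;U₁)}) · (1 + J₂^{−1}·2^{i_q(S₂;U₂)}) · (1 + (J₂M₂^{−1} + J₁M₁^{−1} + J₁J₂(M₁M₂)^{−1})·2^{−i_q(U₁;U₂)})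 ) ]. -/

import Mathlib

open scoped BigOperators

/-- A pmf on a finite type, represented by a nonnegative real-valued function summing to 1. -/
structure FinPMF (α : Type) [Fintype α] where
  p : α → ℝ
  nonneg : ∀ a, 0 ≤ p a
  sum_eq_one : ∑ a, p a = 1

open Classical in
/-- Indicator of a proposition, as a real number. -/
noncomputable def ind (P : Prop) : ℝ := if P then 1 else 0

variable {S1 S2 U1 U2 R1 R2 : Type}
  [Fintype S1] [Fintype S2] [Fintype U1] [Fintype U2] [Fintype R1] [Fintype R2]

/-- The joint pmf `q(s₁,s₂,u₁,u₂) = q(s₁,s₂) q(u₁|s₁) q(u₂|s₂)`. -/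
noncomputable def qBT (qS : FinPMF (S1 × S2)) (qU1 : S1 → FinPMF U1)
    (qU2 : S2 → FinPMF U2) (s1 : S1) (s2 : S2) (u1 : U1) (u2 : U2) : ℝ :=
  qS.p (s1, s2) * (qU1 s1).p u1 * (qU2 s2).p u2

noncomputable def mS1 (qS : FinPMF (S1 × S2)) (s1 : S1) : ℝ :=
  ∑ s2 : S2, qS.p (s1, s2)

noncomputable def mS2 (qS : FinPMF (S1 × S2)) (s2 : S2) : ℝ :=
  ∑ s1 : S1, qS.p (s1, s2)

noncomputable def mU1m (qS : FinPMF (S1 × S2)) (qU1 : S1 → FinPMF U1) (u1 : U1) : ℝ :=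
  ∑ s1 : S1, mS1 qS s1 * (qU1 s1).p u1

noncomputable def mU2m (qS : FinPMF (S1 × S2)) (qU2 : S2 → FinPMF U2) (u2 : U2) : ℝ :=
  ∑ s2 : S2, mS2 qS s2 * (qU2 s2).p u2

noncomputable def mU1U2 (qS : FinPMF (S1 × S2)) (qU1 : S1 → FinPMF U1)
    (qU2 : S2 → FinPMF U2) (u1 : U1) (u2 : U2) : ℝ :=
  ∑ s1 : S1, ∑ s2 : S2, qBT qS qU1 qU2 s1 s2 u1 u2

/-- Information density `i_q(S₁;U₁)`. -/
noncomputable def iS1U1 (qS : FinPMF (S1 × S2)) (qU1 : S1 → FinPMF U1)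
    (s1 : S1) (u1 : U1) : ℝ :=
  Real.logb 2 ((mS1 qS s1 * (qU1 s1).p u1) / (mS1 qS s1 * mU1m qS qU1 u1))

/-- Information density `i_q(S₂;U₂)`. -/
noncomputable def iS2U2 (qS : FinPMF (S1 × S2)) (qU2 : S2 → FinPMF U2)
    (s2 : S2) (u2 : U2) : ℝ :=
  Real.logb 2 ((mS2 qS s2 * (qU2 s2).p u2) / (mS2 qS s2 * mU2m qS qU2 u2))

/-- Information density `i_q(U₁;U₂)`. -/
noncomputable def iU1U2 (qS : FinPMF (S1 × S2)) (qU1 : S1 → FinPMF U1)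
    (qU2 : S2 → FinPMF U2) (u1 : U1) (u2 : U2) : ℝ :=
  Real.logb 2 (mU1U2 qS qU1 qU2 u1 u2 / (mU1m qS qU1 u1 * mU2m qS qU2 u2))

/-- Probability of no-excess distortion
`P[d₁(S₁,Ŝ₁) ≤ D₁ and d₂(S₂,Ŝ₂) ≤ D₂]` of an `(M₁,M₂)`-code for distributed lossy
compression: `(Ŝ₁,Ŝ₂) = ψ(φ₁(S₁), φ₂(S₂))` with stochastic encoders/decoder. -/
noncomputable def pNoExcessBT (M1 M2 : ℕ) (qS : FinPMF (S1 × S2))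
    (d1 : S1 → R1 → ℝ) (d2 : S2 → R2 → ℝ) (D1 D2 : ℝ)
    (enc1 : S1 → FinPMF (Fin M1)) (enc2 : S2 → FinPMF (Fin M2))
    (dec : Fin M1 × Fin M2 → FinPMF (R1 × R2)) : ℝ :=
  ∑ s1 : S1, ∑ s2 : S2, ∑ m1 : Fin M1, ∑ m2 : Fin M2, ∑ r1 : R1, ∑ r2 : R2,
    qS.p (s1, s2) * (enc1 s1).p m1 * (enc2 s2).p m2 * (dec (m1, m2)).p (r1, r2) *
      ind (d1 s1 r1 ≤ D1 ∧ d2 s2 r2 ≤ D2)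

namespace BTaux
open Finset

lemma ind_nonneg (P : Prop) : 0 ≤ ind P := by
  unfold ind; split <;> norm_num

lemma ind_le_one (P : Prop) : ind P ≤ 1 := by
  unfold ind; split <;> norm_num

lemma sum_ind {α : Type} [Fintype α] (x : α) : ∑ m : α, ind (x = m) = 1 := by
  classical
  unfold ind
  simp

lemma sum_ind_mul {α : Type} [Fintype α] (x : α) (H : α → ℝ) :
    ∑ m : α, ind (x = m) * H m = H x := by
  classical
  unfold ind
  simp [ite_mul]

lemma sum_mul_ind {α : Type} [Fintype α] (x : α) (w : α → ℝ) :
    ∑ b : α, w b * ind (b = x) = w x := by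
  classical
  unfold ind
  simp [mul_ite]

lemma sum_mul_ind_mul {α : Type} [Fintype α] (x : α) (w ψ : α → ℝ) :
    ∑ b : α, w b * (ind (b = x) * ψ b) = w x * ψ x := by
  classical
  unfold ind
  simp [ite_mul, mul_ite]

variable {β : Type} [Fintype β] {J : ℕ}

lemma sum_pi_prod (h : Fin J → β → ℝ) :
    ∑ f : Fin J → β, ∏ j, h j (f j) = ∏ j, ∑ b, h j b := by
  classical
  rw [Finset.prod_univ_sum]
  rw [Fintype.piFinset_univ]

lemma prod_ite_one (i : Fin J) (a : Fin J → ℝ) :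
    (∏ j, if i = j then a j else 1) = a i := by
  classical
  simp

lemma prod_ite_two {i i' : Fin J} (hne : i ≠ i') (a b : Fin J → ℝ) :
    (∏ j, if i = j then a j else if i' = j then b j else 1) = a i * b i' := by
  classical
  rw [← Finset.mul_prod_erase univ _ (mem_univ i)]
  rw [if_pos rfl]
  rw [← Finset.mul_prod_erase (univ.erase i) _
      (Finset.mem_erase.mpr ⟨fun h => hne h.symm, mem_univ i'⟩)]
  rw [if_neg hne, if_pos rfl]
  rw [Finset.prod_eq_one, mul_one]
  intro j hj
  rw [Finset.mem_erase, Finset.mem_erase] at hj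
  rw [if_neg (fun h => hj.2.1 h.symm), if_neg (fun h => hj.1 h.symm)]

lemma E_one (w : β → ℝ) (hw : ∑ b, w b = 1) (i : Fin J) (φ : β → ℝ) :
    ∑ f : Fin J → β, (∏ j, w (f j)) * φ (f i) = ∑ b, w b * φ b := by
  classical
  have h1 : ∀ f : Fin J → β,
      (∏ j, w (f j)) * φ (f i) = ∏ j, (w (f j) * (if i = j then φ (f j) else 1)) := by
    intro f
    rw [Finset.prod_mul_distrib, prod_ite_one i (fun j => φ (f j))]
  simp_rw [h1]
  rw [sum_pi_prod (fun j b => w b * (if i = j then φ b else 1))]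
  have h2 : ∀ j : Fin J, (∑ b, w b * (if i = j then φ b else 1))
      = if i = j then (∑ b, w b * φ b) else 1 := by
    intro j
    by_cases hij : i = j <;> simp [hij, hw]
  simp_rw [h2]
  exact prod_ite_one i _

lemma E_two (w : β → ℝ) (hw : ∑ b, w b = 1) {i i' : Fin J} (hne : i ≠ i') (φ ψ : β → ℝ) :
    ∑ f : Fin J → β, (∏ j, w (f j)) * (φ (f i) * ψ (f i'))
      = (∑ b, w b * φ b) * (∑ b, w b * ψ b) := by
  classical
  have h1 : ∀ f : Fin J → β,
      (∏ j, w (f j)) * (φ (f i) * ψ (f i'))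
        = ∏ j, (w (f j) * (if i = j then φ (f j) else if i' = j then ψ (f j) else 1)) := by
    intro f
    rw [Finset.prod_mul_distrib, prod_ite_two hne (fun j => φ (f j)) (fun j => ψ (f j))]
  simp_rw [h1]
  rw [sum_pi_prod (fun j b => w b * (if i = j then φ b else if i' = j then ψ b else 1))]
  have h2 : ∀ j : Fin J, (∑ b, w b * (if i = j then φ b else if i' = j then ψ b else 1))
      = if i = j then (∑ b, w b * φ b) else if i' = j then (∑ b, w b * ψ b) else 1 := by
    intro j
    by_cases hij : i = j
    · simp [hij]
    · by_cases hij' : i' = j <;> simp [hij, hij', hw]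
  simp_rw [h2]
  exact prod_ite_two hne _ _

lemma E_pair (w : β → ℝ) (hw : ∑ b, w b = 1) {i i' : Fin J} (hne : i ≠ i') (h : β → β → ℝ) :
    ∑ f : Fin J → β, (∏ j, w (f j)) * h (f i) (f i')
      = ∑ x, ∑ y, w x * w y * h x y := by
  classical
  have key : ∀ f : Fin J → β, h (f i) (f i')
      = ∑ x, (if x = f i then (1:ℝ) else 0) * h x (f i') := by
    intro f
    simp [ite_mul]
  simp_rw [key, Finset.mul_sum]
  rw [Finset.sum_comm]
  refine Finset.sum_congr rfl (fun x _ => ?_)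
  rw [E_two w hw hne (fun b => if x = b then (1:ℝ) else 0) (fun b => h x b)]
  have : (∑ b, w b * (if x = b then (1:ℝ) else 0)) = w x := by
    simp [mul_ite]
  rw [this, Finset.mul_sum]
  simp [mul_assoc]

lemma amgm4 {α β γ : ℝ} (ha : 0 < α) (hb : 0 < β) (hc : 0 < γ) :
    4 ≤ α + β + γ + (α * β * γ)⁻¹ := by
  have hs : 0 < Real.sqrt (α * β) := Real.sqrt_pos.mpr (by positivity)
  have h1 : 2 * Real.sqrt (α * β) ≤ α + β := by
    have hab : Real.sqrt (α*β) = Real.sqrt α * Real.sqrt β := Real.sqrt_mul ha.le β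
    nlinarith [sq_nonneg (Real.sqrt α - Real.sqrt β), Real.sq_sqrt ha.le, Real.sq_sqrt hb.le,
      Real.sqrt_nonneg α, Real.sqrt_nonneg β]
  have h2 : 2 / Real.sqrt (α * β) ≤ γ + (α * β * γ)⁻¹ := by
    have hg : Real.sqrt (α*β) * (γ + (α * β * γ)⁻¹) ≥ 2 := by
      have hx : Real.sqrt (α*β) ^ 2 = α * β := Real.sq_sqrt (by positivity)
      have h3 : (α * β * γ)⁻¹ = (Real.sqrt (α*β))⁻¹ * (Real.sqrt (α*β))⁻¹ * γ⁻¹ := by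
        rw [← mul_inv, ← mul_inv, ← pow_two, hx]
      rw [h3]
      have key : Real.sqrt (α*β) * γ + (Real.sqrt (α*β))⁻¹ * γ⁻¹ ≥ 2 := by
        have hsg : 0 < Real.sqrt (α*β) * γ := by positivity
        have : (Real.sqrt (α*β))⁻¹ * γ⁻¹ = (Real.sqrt (α*β) * γ)⁻¹ := by rw [mul_inv]
        rw [this]
        nlinarith [sq_nonneg (Real.sqrt (α*β) * γ - 1), mul_inv_cancel₀ hsg.ne']
      calc (2:ℝ) ≤ Real.sqrt (α*β) * γ + (Real.sqrt (α*β))⁻¹ * γ⁻¹ := key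
        _ = Real.sqrt (α*β) * (γ + (Real.sqrt (α*β))⁻¹ * (Real.sqrt (α*β))⁻¹ * γ⁻¹) := by
            field_simp
    rw [div_le_iff₀ hs]
    nlinarith [hg]
  have h3 : 2 * Real.sqrt (α*β) + 2 / Real.sqrt (α*β) ≥ 4 := by
    rw [ge_iff_le, ← sub_nonneg]
    have : 2 * Real.sqrt (α*β) + 2 / Real.sqrt (α*β) - 4
        = 2 * (Real.sqrt (α*β) - 1)^2 / Real.sqrt (α*β) := by
      field_simp
      ring
    rw [this]
    positivity
  linarith

lemma amgm_tangent {x y z p q w : ℝ} (hx : 0 < x) (hy : 0 < y) (hz : 0 < z)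
    (hp : 0 < p) (hq : 0 < q) (hw : 0 < w) :
    (p*q*w)⁻¹ * (4 - x/p - y/q - z/w) ≤ (x*y*z)⁻¹ := by
  have h := amgm4 (div_pos hx hp) (div_pos hy hq) (div_pos hz hw)
  have h2 : (x/p * (y/q) * (z/w))⁻¹ = (p*q*w) * (x*y*z)⁻¹ := by
    field_simp
  rw [h2] at h
  have h3 : 4 - x/p - y/q - z/w ≤ (p*q*w) * (x*y*z)⁻¹ := by linarith
  calc (p*q*w)⁻¹ * (4 - x/p - y/q - z/w) ≤ (p*q*w)⁻¹ * ((p*q*w) * (x*y*z)⁻¹) := by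
        apply mul_le_mul_of_nonneg_left h3 (by positivity)
    _ = (x*y*z)⁻¹ := inv_mul_cancel_left₀ (ne_of_gt (by positivity)) _


end BTaux

namespace BTaux
open Finset

section basics
variable (qS : FinPMF (S1 × S2)) (qU1 : S1 → FinPMF U1) (qU2 : S2 → FinPMF U2)

lemma pmf_le_one {α : Type} [Fintype α] (P : FinPMF α) (a : α) : P.p a ≤ 1 := by
  rw [← P.sum_eq_one]
  exact Finset.single_le_sum (fun b _ => P.nonneg b) (mem_univ a)

lemma mS1_nonneg (s1 : S1) : 0 ≤ mS1 qS s1 :=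
  Finset.sum_nonneg fun s2 _ => qS.nonneg _

lemma mS2_nonneg (s2 : S2) : 0 ≤ mS2 qS s2 :=
  Finset.sum_nonneg fun s1 _ => qS.nonneg _

lemma mU1m_nonneg (u1 : U1) : 0 ≤ mU1m qS qU1 u1 :=
  Finset.sum_nonneg fun s1 _ => mul_nonneg (mS1_nonneg qS s1) ((qU1 s1).nonneg _)

lemma mU2m_nonneg (u2 : U2) : 0 ≤ mU2m qS qU2 u2 :=
  Finset.sum_nonneg fun s2 _ => mul_nonneg (mS2_nonneg qS s2) ((qU2 s2).nonneg _)

lemma qBT_nonneg (s1 s2 u1 u2) : 0 ≤ qBT qS qU1 qU2 s1 s2 u1 u2 :=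
  mul_nonneg (mul_nonneg (qS.nonneg _) ((qU1 s1).nonneg _)) ((qU2 s2).nonneg _)

lemma mU1U2_nonneg (u1 u2) : 0 ≤ mU1U2 qS qU1 qU2 u1 u2 :=
  Finset.sum_nonneg fun s1 _ => Finset.sum_nonneg fun s2 _ => qBT_nonneg qS qU1 qU2 s1 s2 u1 u2

lemma sum_mS1 : ∑ s1, mS1 qS s1 = 1 := by
  rw [← qS.sum_eq_one, Fintype.sum_prod_type]
  rfl

lemma sum_mS2 : ∑ s2, mS2 qS s2 = 1 := by
  rw [← qS.sum_eq_one, Fintype.sum_prod_type]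
  rw [Finset.sum_comm]
  rfl

lemma sum_mU1m : ∑ u1, mU1m qS qU1 u1 = 1 := by
  unfold mU1m
  rw [Finset.sum_comm]
  calc ∑ s1, ∑ u1, mS1 qS s1 * (qU1 s1).p u1
      = ∑ s1, mS1 qS s1 * ∑ u1, (qU1 s1).p u1 := by
        refine Finset.sum_congr rfl fun s1 _ => ?_
        rw [Finset.mul_sum]
    _ = ∑ s1, mS1 qS s1 := by
        refine Finset.sum_congr rfl fun s1 _ => ?_
        rw [(qU1 s1).sum_eq_one, mul_one]
    _ = 1 := sum_mS1 qS

lemma sum_mU2m : ∑ u2, mU2m qS qU2 u2 = 1 := by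
  unfold mU2m
  rw [Finset.sum_comm]
  calc ∑ s2, ∑ u2, mS2 qS s2 * (qU2 s2).p u2
      = ∑ s2, mS2 qS s2 * ∑ u2, (qU2 s2).p u2 := by
        refine Finset.sum_congr rfl fun s2 _ => ?_
        rw [Finset.mul_sum]
    _ = ∑ s2, mS2 qS s2 := by
        refine Finset.sum_congr rfl fun s2 _ => ?_
        rw [(qU2 s2).sum_eq_one, mul_one]
    _ = 1 := sum_mS2 qS

lemma q_le_mS1 (s1 s2) : qS.p (s1, s2) ≤ mS1 qS s1 :=
  Finset.single_le_sum (fun s2' _ => qS.nonneg (s1, s2')) (mem_univ s2)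

lemma q_le_mS2 (s1 s2) : qS.p (s1, s2) ≤ mS2 qS s2 :=
  Finset.single_le_sum (fun s1' _ => qS.nonneg (s1', s2)) (mem_univ s1)

lemma mSq_le_mU1m (s1 u1) : mS1 qS s1 * (qU1 s1).p u1 ≤ mU1m qS qU1 u1 :=
  Finset.single_le_sum
    (fun s1' _ => mul_nonneg (mS1_nonneg qS s1') ((qU1 s1').nonneg _)) (mem_univ s1)

lemma mSq_le_mU2m (s2 u2) : mS2 qS s2 * (qU2 s2).p u2 ≤ mU2m qS qU2 u2 :=
  Finset.single_le_sum
    (fun s2' _ => mul_nonneg (mS2_nonneg qS s2') ((qU2 s2').nonneg _)) (mem_univ s2)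

lemma qBT_le_mU1U2 (s1 s2 u1 u2) : qBT qS qU1 qU2 s1 s2 u1 u2 ≤ mU1U2 qS qU1 qU2 u1 u2 := by
  unfold mU1U2
  calc qBT qS qU1 qU2 s1 s2 u1 u2
      ≤ ∑ s2', qBT qS qU1 qU2 s1 s2' u1 u2 :=
        Finset.single_le_sum (fun s2' _ => qBT_nonneg qS qU1 qU2 s1 s2' u1 u2) (mem_univ s2)
    _ ≤ ∑ s1', ∑ s2', qBT qS qU1 qU2 s1' s2' u1 u2 :=
        Finset.single_le_sum
          (fun s1' _ => Finset.sum_nonneg fun s2' _ => qBT_nonneg qS qU1 qU2 s1' s2' u1 u2)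
          (mem_univ s1)

lemma sum_mU1U2_right (u1) : ∑ u2, mU1U2 qS qU1 qU2 u1 u2 = mU1m qS qU1 u1 := by
  unfold mU1U2 qBT mU1m
  rw [Finset.sum_comm]
  refine Finset.sum_congr rfl fun s1 _ => ?_
  rw [Finset.sum_comm, mS1]
  rw [Finset.sum_mul]
  refine Finset.sum_congr rfl fun s2 _ => ?_
  rw [← Finset.mul_sum, (qU2 s2).sum_eq_one, mul_one]

lemma sum_mU1U2_left (u2) : ∑ u1, mU1U2 qS qU1 qU2 u1 u2 = mU2m qS qU2 u2 := by
  simp only [mU1U2, qBT, mU2m, mS2]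
  rw [Finset.sum_comm]
  have key : ∀ s1, (∑ u1, ∑ s2, qS.p (s1,s2) * (qU1 s1).p u1 * (qU2 s2).p u2)
       = ∑ s2, qS.p (s1,s2) * (qU2 s2).p u2 := by
    intro s1
    rw [Finset.sum_comm]
    refine Finset.sum_congr rfl fun s2 _ => ?_
    have h2 : ∀ u1, qS.p (s1,s2) * (qU1 s1).p u1 * (qU2 s2).p u2
        = (qS.p (s1,s2) * (qU2 s2).p u2) * (qU1 s1).p u1 := fun u1 => by ring
    rw [Finset.sum_congr rfl (fun u1 _ => h2 u1), ← Finset.mul_sum, (qU1 s1).sum_eq_one, mul_one]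
  rw [Finset.sum_congr rfl (fun s1 _ => key s1)]
  rw [Finset.sum_comm]
  refine Finset.sum_congr rfl fun s2 _ => ?_
  rw [Finset.sum_mul]

lemma mU1U2_le_mU1m (u1 u2) : mU1U2 qS qU1 qU2 u1 u2 ≤ mU1m qS qU1 u1 := by
  rw [← sum_mU1U2_right qS qU1 qU2 u1]
  exact Finset.single_le_sum (fun u2' _ => mU1U2_nonneg qS qU1 qU2 u1 u2') (mem_univ u2)

lemma mU1U2_le_mU2m (u1 u2) : mU1U2 qS qU1 qU2 u1 u2 ≤ mU2m qS qU2 u2 := by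
  rw [← sum_mU1U2_left qS qU1 qU2 u2]
  exact Finset.single_le_sum (fun u1' _ => mU1U2_nonneg qS qU1 qU2 u1' u2) (mem_univ u1)

end basics
end BTaux
namespace BTaux
open Finset

section omega
variable (qS : FinPMF (S1 × S2)) (qU1 : S1 → FinPMF U1) (qU2 : S2 → FinPMF U2)
variable (J1 J2 M1 M2 : ℕ)

/-- ratio q(u1|s1)/m(u1) -/
noncomputable def ra (s1 : S1) (u1 : U1) : ℝ := (qU1 s1).p u1 / mU1m qS qU1 u1
noncomputable def rb (s2 : S2) (u2 : U2) : ℝ := (qU2 s2).p u2 / mU2m qS qU2 u2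
noncomputable def rc (u1 : U1) (u2 : U2) : ℝ :=
  mU1U2 qS qU1 qU2 u1 u2 / (mU1m qS qU1 u1 * mU2m qS qU2 u2)

lemma ra_nonneg (s1 u1) : 0 ≤ ra qS qU1 s1 u1 :=
  div_nonneg ((qU1 s1).nonneg _) (mU1m_nonneg qS qU1 u1)

lemma rb_nonneg (s2 u2) : 0 ≤ rb qS qU2 s2 u2 :=
  div_nonneg ((qU2 s2).nonneg _) (mU2m_nonneg qS qU2 u2)

lemma rc_nonneg (u1 u2) : 0 ≤ rc qS qU1 qU2 u1 u2 :=
  div_nonneg (mU1U2_nonneg qS qU1 qU2 u1 u2)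
    (mul_nonneg (mU1m_nonneg qS qU1 u1) (mU2m_nonneg qS qU2 u2))

lemma sig1_le_one (s1) : ∑ u1, mU1m qS qU1 u1 * ra qS qU1 s1 u1 ≤ 1 := by
  calc ∑ u1, mU1m qS qU1 u1 * ra qS qU1 s1 u1 ≤ ∑ u1, (qU1 s1).p u1 := by
        refine Finset.sum_le_sum fun u1 _ => ?_
        by_cases h : mU1m qS qU1 u1 = 0
        · simp [ra, h]
          exact (qU1 s1).nonneg u1
        · rw [ra, mul_comm, div_mul_cancel₀ _ h]
    _ = 1 := (qU1 s1).sum_eq_one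

lemma sig2_le_one (s2) : ∑ u2, mU2m qS qU2 u2 * rb qS qU2 s2 u2 ≤ 1 := by
  calc ∑ u2, mU2m qS qU2 u2 * rb qS qU2 s2 u2 ≤ ∑ u2, (qU2 s2).p u2 := by
        refine Finset.sum_le_sum fun u2 _ => ?_
        by_cases h : mU2m qS qU2 u2 = 0
        · simp [rb, h]
          exact (qU2 s2).nonneg u2
        · rw [rb, mul_comm, div_mul_cancel₀ _ h]
    _ = 1 := (qU2 s2).sum_eq_one

lemma div_self_le_one' {a : ℝ} (_ha : 0 ≤ a) : a / a ≤ 1 := by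
  by_cases h : a = 0
  · simp [h]
  · rw [div_self h]

lemma rowB (u1) : ∑ u2, mU2m qS qU2 u2 * rc qS qU1 qU2 u1 u2 ≤ 1 := by
  have hterm : ∀ u2, mU2m qS qU2 u2 * rc qS qU1 qU2 u1 u2
      ≤ mU1U2 qS qU1 qU2 u1 u2 / mU1m qS qU1 u1 := by
    intro u2
    by_cases hm2 : mU2m qS qU2 u2 = 0
    · rw [hm2, zero_mul]
      exact div_nonneg (mU1U2_nonneg qS qU1 qU2 u1 u2) (mU1m_nonneg qS qU1 u1)
    by_cases hm1 : mU1m qS qU1 u1 = 0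
    · have h12 : mU1U2 qS qU1 qU2 u1 u2 = 0 :=
        le_antisymm (hm1 ▸ mU1U2_le_mU1m qS qU1 qU2 u1 u2) (mU1U2_nonneg qS qU1 qU2 u1 u2)
      simp [rc, h12]
    · apply le_of_eq
      rw [rc]
      field_simp
  calc ∑ u2, mU2m qS qU2 u2 * rc qS qU1 qU2 u1 u2
      ≤ ∑ u2, mU1U2 qS qU1 qU2 u1 u2 / mU1m qS qU1 u1 := Finset.sum_le_sum fun u2 _ => hterm u2
    _ = (∑ u2, mU1U2 qS qU1 qU2 u1 u2) / mU1m qS qU1 u1 := by rw [Finset.sum_div]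
    _ = mU1m qS qU1 u1 / mU1m qS qU1 u1 := by rw [sum_mU1U2_right]
    _ ≤ 1 := div_self_le_one' (mU1m_nonneg qS qU1 u1)

lemma colB (u2) : ∑ u1, mU1m qS qU1 u1 * rc qS qU1 qU2 u1 u2 ≤ 1 := by
  have hterm : ∀ u1, mU1m qS qU1 u1 * rc qS qU1 qU2 u1 u2
      ≤ mU1U2 qS qU1 qU2 u1 u2 / mU2m qS qU2 u2 := by
    intro u1
    by_cases hm1 : mU1m qS qU1 u1 = 0
    · rw [hm1, zero_mul]
      exact div_nonneg (mU1U2_nonneg qS qU1 qU2 u1 u2) (mU2m_nonneg qS qU2 u2)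
    by_cases hm2 : mU2m qS qU2 u2 = 0
    · have h12 : mU1U2 qS qU1 qU2 u1 u2 = 0 :=
        le_antisymm (hm2 ▸ mU1U2_le_mU2m qS qU1 qU2 u1 u2) (mU1U2_nonneg qS qU1 qU2 u1 u2)
      simp [rc, h12]
    · apply le_of_eq
      rw [rc]
      field_simp
  calc ∑ u1, mU1m qS qU1 u1 * rc qS qU1 qU2 u1 u2
      ≤ ∑ u1, mU1U2 qS qU1 qU2 u1 u2 / mU2m qS qU2 u2 := Finset.sum_le_sum fun u1 _ => hterm u1
    _ = (∑ u1, mU1U2 qS qU1 qU2 u1 u2) / mU2m qS qU2 u2 := by rw [Finset.sum_div]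
    _ = mU2m qS qU2 u2 / mU2m qS qU2 u2 := by rw [sum_mU1U2_left]
    _ ≤ 1 := div_self_le_one' (mU2m_nonneg qS qU2 u2)

lemma totB : ∑ u1, mU1m qS qU1 u1 * ∑ u2, mU2m qS qU2 u2 * rc qS qU1 qU2 u1 u2 ≤ 1 := by
  calc ∑ u1, mU1m qS qU1 u1 * ∑ u2, mU2m qS qU2 u2 * rc qS qU1 qU2 u1 u2
      ≤ ∑ u1, mU1m qS qU1 u1 := by
        refine Finset.sum_le_sum fun u1 _ => ?_
        calc mU1m qS qU1 u1 * ∑ u2, mU2m qS qU2 u2 * rc qS qU1 qU2 u1 u2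
            ≤ mU1m qS qU1 u1 * 1 :=
              mul_le_mul_of_nonneg_left (rowB qS qU1 qU2 u1) (mU1m_nonneg qS qU1 u1)
          _ = mU1m qS qU1 u1 := mul_one _
    _ = 1 := sum_mU1m qS qU1

/-- The codebook/binning sample space. -/
abbrev Om (U1 U2 : Type) (J1 J2 M1 M2 : ℕ) : Type :=
  (Fin J1 → U1) × (Fin J2 → U2) × (Fin J1 → Fin M1) × (Fin J2 → Fin M2)

noncomputable def muBT (θ : Om U1 U2 J1 J2 M1 M2) : ℝ :=
  (∏ j, mU1m qS qU1 (θ.1 j)) * (∏ j, mU2m qS qU2 (θ.2.1 j)) *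
    (∏ _j : Fin J1, (M1:ℝ)⁻¹) * (∏ _j : Fin J2, (M2:ℝ)⁻¹)

lemma muBT_nonneg (θ : Om U1 U2 J1 J2 M1 M2) : 0 ≤ muBT qS qU1 qU2 J1 J2 M1 M2 θ := by
  unfold muBT
  have h1 : (0:ℝ) ≤ ∏ j, mU1m qS qU1 (θ.1 j) :=
    Finset.prod_nonneg fun j _ => mU1m_nonneg qS qU1 _
  have h2 : (0:ℝ) ≤ ∏ j, mU2m qS qU2 (θ.2.1 j) :=
    Finset.prod_nonneg fun j _ => mU2m_nonneg qS qU2 _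
  have h3 : (0:ℝ) ≤ ∏ _j : Fin J1, (M1:ℝ)⁻¹ :=
    Finset.prod_nonneg fun j _ => by positivity
  have h4 : (0:ℝ) ≤ ∏ _j : Fin J2, (M2:ℝ)⁻¹ :=
    Finset.prod_nonneg fun j _ => by positivity
  positivity

noncomputable def Expect (F : Om U1 U2 J1 J2 M1 M2 → ℝ) : ℝ :=
  ∑ θ, muBT qS qU1 qU2 J1 J2 M1 M2 θ * F θ

lemma Expect_mono {F G : Om U1 U2 J1 J2 M1 M2 → ℝ} (h : ∀ θ, F θ ≤ G θ) :
    Expect qS qU1 qU2 J1 J2 M1 M2 F ≤ Expect qS qU1 qU2 J1 J2 M1 M2 G :=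
  Finset.sum_le_sum fun θ _ =>
    mul_le_mul_of_nonneg_left (h θ) (muBT_nonneg qS qU1 qU2 J1 J2 M1 M2 θ)

lemma Expect_nonneg {F : Om U1 U2 J1 J2 M1 M2 → ℝ} (h : ∀ θ, 0 ≤ F θ) :
    0 ≤ Expect qS qU1 qU2 J1 J2 M1 M2 F :=
  Finset.sum_nonneg fun θ _ =>
    mul_nonneg (muBT_nonneg qS qU1 qU2 J1 J2 M1 M2 θ) (h θ)

lemma Expect_sum {ι : Type} [Fintype ι] (F : ι → Om U1 U2 J1 J2 M1 M2 → ℝ) :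
    Expect qS qU1 qU2 J1 J2 M1 M2 (fun θ => ∑ i, F i θ)
      = ∑ i, Expect qS qU1 qU2 J1 J2 M1 M2 (F i) := by
  unfold Expect
  simp_rw [Finset.mul_sum]
  rw [Finset.sum_comm]

lemma Expect_const_mul (c : ℝ) (F : Om U1 U2 J1 J2 M1 M2 → ℝ) :
    Expect qS qU1 qU2 J1 J2 M1 M2 (fun θ => c * F θ)
      = c * Expect qS qU1 qU2 J1 J2 M1 M2 F := by
  unfold Expect
  rw [Finset.mul_sum]
  refine Finset.sum_congr rfl fun θ _ => by ring

lemma sum4_factor {A B C D : Type} [Fintype A] [Fintype B] [Fintype C] [Fintype D]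
    (a : A → ℝ) (b : B → ℝ) (c : C → ℝ) (d : D → ℝ) :
    ∑ x, ∑ y, ∑ z, ∑ t, a x * b y * c z * d t
      = (∑ x, a x) * (∑ y, b y) * (∑ z, c z) * (∑ t, d t) := by
  calc ∑ x, ∑ y, ∑ z, ∑ t, a x * b y * c z * d t
      = ∑ x, ∑ y, ∑ z, a x * b y * c z * ∑ t, d t := by
        refine Finset.sum_congr rfl fun x _ => Finset.sum_congr rfl fun y _ =>
          Finset.sum_congr rfl fun z _ => ?_
        rw [← Finset.mul_sum]
    _ = ∑ x, ∑ y, a x * b y * (∑ z, c z) * ∑ t, d t := by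
        refine Finset.sum_congr rfl fun x _ => Finset.sum_congr rfl fun y _ => ?_
        rw [← Finset.sum_mul, ← Finset.mul_sum]
    _ = ∑ x, a x * (∑ y, b y) * (∑ z, c z) * ∑ t, d t := by
        refine Finset.sum_congr rfl fun x _ => ?_
        rw [← Finset.sum_mul, ← Finset.sum_mul, ← Finset.mul_sum]
    _ = (∑ x, a x) * (∑ y, b y) * (∑ z, c z) * ∑ t, d t := by
        rw [← Finset.sum_mul, ← Finset.sum_mul, ← Finset.sum_mul]

lemma Expect_factor (f1 : (Fin J1 → U1) → ℝ) (f2 : (Fin J2 → U2) → ℝ)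
    (f3 : (Fin J1 → Fin M1) → ℝ) (f4 : (Fin J2 → Fin M2) → ℝ) :
    Expect qS qU1 qU2 J1 J2 M1 M2 (fun θ => f1 θ.1 * f2 θ.2.1 * f3 θ.2.2.1 * f4 θ.2.2.2)
      = (∑ c1, (∏ j, mU1m qS qU1 (c1 j)) * f1 c1) *
        (∑ c2, (∏ j, mU2m qS qU2 (c2 j)) * f2 c2) *
        (∑ b1, (∏ _j : Fin J1, (M1:ℝ)⁻¹) * f3 b1) *
        (∑ b2, (∏ _j : Fin J2, (M2:ℝ)⁻¹) * f4 b2) := by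
  unfold Expect muBT
  rw [Fintype.sum_prod_type]
  simp_rw [Fintype.sum_prod_type]
  trans ∑ c1 : Fin J1 → U1, ∑ c2 : Fin J2 → U2, ∑ b1 : Fin J1 → Fin M1, ∑ b2 : Fin J2 → Fin M2,
      ((∏ j, mU1m qS qU1 (c1 j)) * f1 c1) * ((∏ j, mU2m qS qU2 (c2 j)) * f2 c2) *
      ((∏ _j : Fin J1, (M1:ℝ)⁻¹) * f3 b1) * ((∏ _j : Fin J2, (M2:ℝ)⁻¹) * f4 b2)
  · refine Finset.sum_congr rfl fun c1 _ => Finset.sum_congr rfl fun c2 _ =>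
      Finset.sum_congr rfl fun b1 _ => Finset.sum_congr rfl fun b2 _ => ?_
    ring
  · exact sum4_factor _ _ _ _

lemma sum_wb1 (hM1 : 1 ≤ M1) :
    ∑ b1 : Fin J1 → Fin M1, (∏ _j : Fin J1, (M1:ℝ)⁻¹) = 1 := by
  have : ∀ b1 : Fin J1 → Fin M1, (∏ _j : Fin J1, (M1:ℝ)⁻¹)
      = ∏ j : Fin J1, (fun (_ : Fin J1) (_ : Fin M1) => (M1:ℝ)⁻¹) j (b1 j) := by
    intro b1; rfl
  rw [Finset.sum_congr rfl fun b1 _ => this b1]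
  rw [sum_pi_prod (fun (_ : Fin J1) (_ : Fin M1) => (M1:ℝ)⁻¹)]
  have hM : (M1:ℝ) ≠ 0 := Nat.cast_ne_zero.mpr (by omega)
  have : ∀ j : Fin J1, (∑ _b : Fin M1, (M1:ℝ)⁻¹) = 1 := by
    intro j
    rw [Finset.sum_const, Finset.card_univ, Fintype.card_fin]
    rw [nsmul_eq_mul, mul_inv_cancel₀ hM]
  rw [Finset.prod_congr rfl fun j _ => this j, Finset.prod_const_one]

lemma sum_wb2 (hM2 : 1 ≤ M2) :
    ∑ b2 : Fin J2 → Fin M2, (∏ _j : Fin J2, (M2:ℝ)⁻¹) = 1 := by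
  have : ∀ b2 : Fin J2 → Fin M2, (∏ _j : Fin J2, (M2:ℝ)⁻¹)
      = ∏ j : Fin J2, (fun (_ : Fin J2) (_ : Fin M2) => (M2:ℝ)⁻¹) j (b2 j) := by
    intro b2; rfl
  rw [Finset.sum_congr rfl fun b2 _ => this b2]
  rw [sum_pi_prod (fun (_ : Fin J2) (_ : Fin M2) => (M2:ℝ)⁻¹)]
  have hM : (M2:ℝ) ≠ 0 := Nat.cast_ne_zero.mpr (by omega)
  have : ∀ j : Fin J2, (∑ _b : Fin M2, (M2:ℝ)⁻¹) = 1 := by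
    intro j
    rw [Finset.sum_const, Finset.card_univ, Fintype.card_fin]
    rw [nsmul_eq_mul, mul_inv_cancel₀ hM]
  rw [Finset.prod_congr rfl fun j _ => this j, Finset.prod_const_one]

lemma sum_w1 : ∑ c1 : Fin J1 → U1, (∏ j, mU1m qS qU1 (c1 j)) = 1 := by
  rw [sum_pi_prod (fun (_ : Fin J1) (b : U1) => mU1m qS qU1 b)]
  rw [Finset.prod_congr rfl fun j _ => sum_mU1m qS qU1, Finset.prod_const_one]

lemma sum_w2 : ∑ c2 : Fin J2 → U2, (∏ j, mU2m qS qU2 (c2 j)) = 1 := by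
  rw [sum_pi_prod (fun (_ : Fin J2) (b : U2) => mU2m qS qU2 b)]
  rw [Finset.prod_congr rfl fun j _ => sum_mU2m qS qU2, Finset.prod_const_one]

lemma sum_muBT (hM1 : 1 ≤ M1) (hM2 : 1 ≤ M2) :
    ∑ θ : Om U1 U2 J1 J2 M1 M2, muBT qS qU1 qU2 J1 J2 M1 M2 θ = 1 := by
  have h := Expect_factor qS qU1 qU2 J1 J2 M1 M2 (fun _ => 1) (fun _ => 1) (fun _ => 1) (fun _ => 1)
  unfold Expect at h
  simp_rw [mul_one] at h
  rw [h, sum_w1, sum_w2, sum_wb1 J1 M1 hM1, sum_wb2 J2 M2 hM2]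
  norm_num

end omega
end BTaux
namespace BTaux
open Finset

section comps
variable {β : Type} [Fintype β] {J : ℕ}

lemma Eind (w : β → ℝ) (hw : ∑ b, w b = 1) (i : Fin J) (u : β) :
    ∑ f : Fin J → β, (∏ j, w (f j)) * ind (f i = u) = w u := by
  rw [E_one w hw i (fun b => ind (b = u))]
  exact sum_mul_ind u w

lemma Eind_at (w : β → ℝ) (hw : ∑ b, w b = 1) (i : Fin J) (u : β) (φ : β → ℝ) :
    ∑ f : Fin J → β, (∏ j, w (f j)) * (ind (f i = u) * φ (f i)) = w u * φ u := by
  rw [E_one w hw i (fun b => ind (b = u) * φ b)]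
  exact sum_mul_ind_mul u w φ

lemma Eind_two (w : β → ℝ) (hw : ∑ b, w b = 1) {i i' : Fin J} (h : i ≠ i') (u : β) (φ : β → ℝ) :
    ∑ f : Fin J → β, (∏ j, w (f j)) * (ind (f i = u) * φ (f i'))
      = w u * ∑ b, w b * φ b := by
  rw [E_two w hw h (fun b => ind (b = u)) φ]
  rw [sum_mul_ind u w]

lemma Epair_unif {M : ℕ} (hM : 1 ≤ M) {i i' : Fin J} (h : i ≠ i') :
    ∑ f : Fin J → Fin M, (∏ _j : Fin J, ((M:ℝ))⁻¹) * ind (f i = f i') = (M:ℝ)⁻¹ := by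
  have hMne : (M:ℝ) ≠ 0 := Nat.cast_ne_zero.mpr (by omega)
  have hw : ∑ _b : Fin M, (M:ℝ)⁻¹ = 1 := by
    rw [Finset.sum_const, Finset.card_univ, Fintype.card_fin, nsmul_eq_mul,
      mul_inv_cancel₀ hMne]
  rw [E_pair (fun _ => (M:ℝ)⁻¹) hw h (fun x y => ind (x = y))]
  have : ∀ x : Fin M, ∑ y : Fin M, (M:ℝ)⁻¹ * (M:ℝ)⁻¹ * ind (x = y) = (M:ℝ)⁻¹ * (M:ℝ)⁻¹ := by
    intro x
    have h2 : ∀ y : Fin M, (M:ℝ)⁻¹ * (M:ℝ)⁻¹ * ind (x = y)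
        = (M:ℝ)⁻¹ * (ind (x = y) * (M:ℝ)⁻¹) := fun y => by ring
    rw [Finset.sum_congr rfl fun y _ => h2 y, ← Finset.mul_sum, sum_ind_mul x (fun _ => (M:ℝ)⁻¹)]
  rw [Finset.sum_congr rfl fun x _ => this x, Finset.sum_const, Finset.card_univ,
    Fintype.card_fin, nsmul_eq_mul]
  field_simp

end comps

section moments
variable (qS : FinPMF (S1 × S2)) (qU1 : S1 → FinPMF U1) (qU2 : S2 → FinPMF U2)
variable (J1 J2 M1 M2 : ℕ)

noncomputable def Z1 (s1 : S1) (c1 : Fin J1 → U1) : ℝ := ∑ j, ra qS qU1 s1 (c1 j)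
noncomputable def Z2 (s2 : S2) (c2 : Fin J2 → U2) : ℝ := ∑ j, rb qS qU2 s2 (c2 j)

noncomputable def WB (θ : Om U1 U2 J1 J2 M1 M2) (n1 : Fin M1) (n2 : Fin M2) : ℝ :=
  ∑ j1', ∑ j2', ind (θ.2.2.1 j1' = n1) * ind (θ.2.2.2 j2' = n2) *
    rc qS qU1 qU2 (θ.1 j1') (θ.2.1 j2')

noncomputable def Wt (θ : Om U1 U2 J1 J2 M1 M2) (j1 : Fin J1) (j2 : Fin J2) : ℝ :=
  WB qS qU1 qU2 J1 J2 M1 M2 θ (θ.2.2.1 j1) (θ.2.2.2 j2)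

lemma Z1_nonneg (s1 c1) : 0 ≤ Z1 qS qU1 J1 s1 c1 :=
  Finset.sum_nonneg fun j _ => ra_nonneg qS qU1 s1 _

lemma Z2_nonneg (s2 c2) : 0 ≤ Z2 qS qU2 J2 s2 c2 :=
  Finset.sum_nonneg fun j _ => rb_nonneg qS qU2 s2 _

lemma WB_nonneg (θ n1 n2) : 0 ≤ WB qS qU1 qU2 J1 J2 M1 M2 θ n1 n2 := by
  unfold WB
  exact Finset.sum_nonneg fun _ _ => Finset.sum_nonneg fun _ _ =>
    mul_nonneg (mul_nonneg (ind_nonneg _) (ind_nonneg _)) (rc_nonneg qS qU1 qU2 _ _)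

lemma Wt_nonneg (θ j1 j2) : 0 ≤ Wt qS qU1 qU2 J1 J2 M1 M2 θ j1 j2 :=
  WB_nonneg qS qU1 qU2 J1 J2 M1 M2 θ _ _

lemma Z1_ge (s1 c1 j) : ra qS qU1 s1 (c1 j) ≤ Z1 qS qU1 J1 s1 c1 :=
  Finset.single_le_sum (fun j' _ => ra_nonneg qS qU1 s1 _) (mem_univ j)

lemma Z2_ge (s2 c2 j) : rb qS qU2 s2 (c2 j) ≤ Z2 qS qU2 J2 s2 c2 :=
  Finset.single_le_sum (fun j' _ => rb_nonneg qS qU2 s2 _) (mem_univ j)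

lemma ind_rfl (x : α) : ind (x = x) = 1 := by simp [ind]

lemma ind_true : ind True = 1 := by simp [ind]

lemma Wt_ge (θ j1 j2) : rc qS qU1 qU2 (θ.1 j1) (θ.2.1 j2) ≤ Wt qS qU1 qU2 J1 J2 M1 M2 θ j1 j2 := by
  unfold Wt WB
  have hterm : ∀ (j1' : Fin J1) (j2' : Fin J2), (0:ℝ) ≤
      ind (θ.2.2.1 j1' = θ.2.2.1 j1) * ind (θ.2.2.2 j2' = θ.2.2.2 j2) *
        rc qS qU1 qU2 (θ.1 j1') (θ.2.1 j2') := fun j1' j2' =>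
    mul_nonneg (mul_nonneg (ind_nonneg _) (ind_nonneg _)) (rc_nonneg qS qU1 qU2 _ _)
  calc rc qS qU1 qU2 (θ.1 j1) (θ.2.1 j2)
      = ind (θ.2.2.1 j1 = θ.2.2.1 j1) * ind (θ.2.2.2 j2 = θ.2.2.2 j2) *
        rc qS qU1 qU2 (θ.1 j1) (θ.2.1 j2) := by rw [ind_rfl, ind_rfl, one_mul, one_mul]
    _ ≤ ∑ j2', ind (θ.2.2.1 j1 = θ.2.2.1 j1) * ind (θ.2.2.2 j2' = θ.2.2.2 j2) *
        rc qS qU1 qU2 (θ.1 j1) (θ.2.1 j2') :=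
        Finset.single_le_sum (fun j2' _ => hterm j1 j2') (mem_univ j2)
    _ ≤ ∑ j1', ∑ j2', ind (θ.2.2.1 j1' = θ.2.2.1 j1) * ind (θ.2.2.2 j2' = θ.2.2.2 j2) *
        rc qS qU1 qU2 (θ.1 j1') (θ.2.1 j2') :=
        Finset.single_le_sum
          (fun j1' _ => Finset.sum_nonneg fun j2' _ => hterm j1' j2') (mem_univ j1)

end moments
end BTaux
namespace BTaux
open Finset

section moments2
variable (qS : FinPMF (S1 × S2)) (qU1 : S1 → FinPMF U1) (qU2 : S2 → FinPMF U2)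
variable (J1 J2 M1 M2 : ℕ)

lemma Expect_congr {F G : Om U1 U2 J1 J2 M1 M2 → ℝ} (h : ∀ θ, F θ = G θ) :
    Expect qS qU1 qU2 J1 J2 M1 M2 F = Expect qS qU1 qU2 J1 J2 M1 M2 G := by
  unfold Expect
  exact Finset.sum_congr rfl fun θ _ => by rw [h θ]

/-- Generic evaluator: expectation of a 4-factored integrand. -/
lemma Expect_eval (hM1 : 1 ≤ M1) (hM2 : 1 ≤ M2)
    (F : Om U1 U2 J1 J2 M1 M2 → ℝ)
    (f1 : (Fin J1 → U1) → ℝ) (f2 : (Fin J2 → U2) → ℝ)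
    (f3 : (Fin J1 → Fin M1) → ℝ) (f4 : (Fin J2 → Fin M2) → ℝ)
    (hF : ∀ θ, F θ = f1 θ.1 * f2 θ.2.1 * f3 θ.2.2.1 * f4 θ.2.2.2)
    (A B C D : ℝ)
    (hA : ∑ c1, (∏ j, mU1m qS qU1 (c1 j)) * f1 c1 = A)
    (hB : ∑ c2, (∏ j, mU2m qS qU2 (c2 j)) * f2 c2 = B)
    (hC : ∑ b1, (∏ _j : Fin J1, (M1:ℝ)⁻¹) * f3 b1 = C)
    (hD : ∑ b2, (∏ _j : Fin J2, (M2:ℝ)⁻¹) * f4 b2 = D) :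
    Expect qS qU1 qU2 J1 J2 M1 M2 F = A * B * C * D := by
  rw [Expect_congr qS qU1 qU2 J1 J2 M1 M2 hF]
  rw [Expect_factor qS qU1 qU2 J1 J2 M1 M2 f1 f2 f3 f4, hA, hB, hC, hD]

lemma sum_wb1_mul_one (hM1 : 1 ≤ M1) :
    ∑ b1 : Fin J1 → Fin M1, (∏ _j : Fin J1, (M1:ℝ)⁻¹) * (fun _ => (1:ℝ)) b1 = 1 := by
  simp only [mul_one]
  exact sum_wb1 J1 M1 hM1

lemma sum_wb2_mul_one (hM2 : 1 ≤ M2) :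
    ∑ b2 : Fin J2 → Fin M2, (∏ _j : Fin J2, (M2:ℝ)⁻¹) * (fun _ => (1:ℝ)) b2 = 1 := by
  simp only [mul_one]
  exact sum_wb2 J2 M2 hM2

/-- E[1_G] = m1(u1) m2(u2). -/
lemma momG (hM1 : 1 ≤ M1) (hM2 : 1 ≤ M2) (u1 : U1) (u2 : U2) (j1 : Fin J1) (j2 : Fin J2) :
    Expect qS qU1 qU2 J1 J2 M1 M2 (fun θ => ind (θ.1 j1 = u1) * ind (θ.2.1 j2 = u2))
      = mU1m qS qU1 u1 * mU2m qS qU2 u2 := by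
  have h := Expect_eval qS qU1 qU2 J1 J2 M1 M2 hM1 hM2
    (fun θ => ind (θ.1 j1 = u1) * ind (θ.2.1 j2 = u2))
    (fun c1 => ind (c1 j1 = u1)) (fun c2 => ind (c2 j2 = u2))
    (fun _ => (1:ℝ)) (fun _ => (1:ℝ))
    (fun θ => by ring)
    (mU1m qS qU1 u1) (mU2m qS qU2 u2) 1 1
    (Eind (mU1m qS qU1) (sum_mU1m qS qU1) j1 u1)
    (Eind (mU2m qS qU2) (sum_mU2m qS qU2) j2 u2)
    (sum_wb1_mul_one J1 M1 hM1) (sum_wb2_mul_one J2 M2 hM2)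
  rw [h]
  ring

/-- E[1_G Z1] ≤ m1 m2 (a + J1). -/
lemma momZ1 (hM1 : 1 ≤ M1) (hM2 : 1 ≤ M2) (s1 : S1) (u1 : U1) (u2 : U2)
    (j1 : Fin J1) (j2 : Fin J2) :
    Expect qS qU1 qU2 J1 J2 M1 M2
      (fun θ => ind (θ.1 j1 = u1) * ind (θ.2.1 j2 = u2) * Z1 qS qU1 J1 s1 θ.1)
      ≤ mU1m qS qU1 u1 * mU2m qS qU2 u2 * (ra qS qU1 s1 u1 + J1) := by
  have hm1 := mU1m_nonneg qS qU1 u1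
  have hm2 := mU2m_nonneg qS qU2 u2
  have e1 : Expect qS qU1 qU2 J1 J2 M1 M2
      (fun θ => ind (θ.1 j1 = u1) * ind (θ.2.1 j2 = u2) * Z1 qS qU1 J1 s1 θ.1)
      = ∑ j : Fin J1, Expect qS qU1 qU2 J1 J2 M1 M2
          (fun θ => ind (θ.1 j1 = u1) * ind (θ.2.1 j2 = u2) * ra qS qU1 s1 (θ.1 j)) := by
    rw [← Expect_sum]
    apply Expect_congr
    intro θ
    unfold Z1
    rw [Finset.mul_sum]
  rw [e1]
  have hterm : ∀ j : Fin J1, Expect qS qU1 qU2 J1 J2 M1 M2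
      (fun θ => ind (θ.1 j1 = u1) * ind (θ.2.1 j2 = u2) * ra qS qU1 s1 (θ.1 j))
      ≤ (if j = j1 then mU1m qS qU1 u1 * ra qS qU1 s1 u1 else mU1m qS qU1 u1)
          * mU2m qS qU2 u2 := by
    intro j
    by_cases hj : j = j1
    · subst hj
      have h := Expect_eval qS qU1 qU2 J1 J2 M1 M2 hM1 hM2
        (fun θ => ind (θ.1 j = u1) * ind (θ.2.1 j2 = u2) * ra qS qU1 s1 (θ.1 j))
        (fun c1 => ind (c1 j = u1) * ra qS qU1 s1 (c1 j)) (fun c2 => ind (c2 j2 = u2))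
        (fun _ => (1:ℝ)) (fun _ => (1:ℝ))
        (fun θ => by ring)
        (mU1m qS qU1 u1 * ra qS qU1 s1 u1) (mU2m qS qU2 u2) 1 1
        (Eind_at (mU1m qS qU1) (sum_mU1m qS qU1) j u1 (ra qS qU1 s1))
        (Eind (mU2m qS qU2) (sum_mU2m qS qU2) j2 u2)
        (sum_wb1_mul_one J1 M1 hM1) (sum_wb2_mul_one J2 M2 hM2)
      rw [h]
      rw [if_pos rfl]
      apply le_of_eq
      ring
    · have h := Expect_eval qS qU1 qU2 J1 J2 M1 M2 hM1 hM2
        (fun θ => ind (θ.1 j1 = u1) * ind (θ.2.1 j2 = u2) * ra qS qU1 s1 (θ.1 j))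
        (fun c1 => ind (c1 j1 = u1) * ra qS qU1 s1 (c1 j)) (fun c2 => ind (c2 j2 = u2))
        (fun _ => (1:ℝ)) (fun _ => (1:ℝ))
        (fun θ => by ring)
        (mU1m qS qU1 u1 * ∑ b, mU1m qS qU1 b * ra qS qU1 s1 b) (mU2m qS qU2 u2) 1 1
        (Eind_two (mU1m qS qU1) (sum_mU1m qS qU1) (fun hh => hj hh.symm) u1 (ra qS qU1 s1))
        (Eind (mU2m qS qU2) (sum_mU2m qS qU2) j2 u2)
        (sum_wb1_mul_one J1 M1 hM1) (sum_wb2_mul_one J2 M2 hM2)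
      rw [h, if_neg hj]
      have hsig := sig1_le_one qS qU1 s1
      have hsignn : 0 ≤ ∑ b, mU1m qS qU1 b * ra qS qU1 s1 b :=
        Finset.sum_nonneg fun b _ => mul_nonneg (mU1m_nonneg qS qU1 b) (ra_nonneg qS qU1 s1 b)
      calc mU1m qS qU1 u1 * (∑ b, mU1m qS qU1 b * ra qS qU1 s1 b) * mU2m qS qU2 u2 * 1 * 1
          ≤ mU1m qS qU1 u1 * 1 * mU2m qS qU2 u2 * 1 * 1 := by
            apply mul_le_mul_of_nonneg_right
            apply mul_le_mul_of_nonneg_right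
            apply mul_le_mul_of_nonneg_right
            · exact mul_le_mul_of_nonneg_left hsig hm1
            · exact hm2
            · norm_num
            · norm_num
        _ = mU1m qS qU1 u1 * mU2m qS qU2 u2 := by ring
  calc ∑ j : Fin J1, Expect qS qU1 qU2 J1 J2 M1 M2
        (fun θ => ind (θ.1 j1 = u1) * ind (θ.2.1 j2 = u2) * ra qS qU1 s1 (θ.1 j))
      ≤ ∑ j : Fin J1, (if j = j1 then mU1m qS qU1 u1 * ra qS qU1 s1 u1 else mU1m qS qU1 u1)
          * mU2m qS qU2 u2 := Finset.sum_le_sum fun j _ => hterm j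
    _ ≤ mU1m qS qU1 u1 * mU2m qS qU2 u2 * (ra qS qU1 s1 u1 + J1) := by
        rw [← Finset.add_sum_erase univ _ (mem_univ j1), if_pos rfl]
        have hconst : ∀ j ∈ univ.erase j1,
            (if j = j1 then mU1m qS qU1 u1 * ra qS qU1 s1 u1 else mU1m qS qU1 u1)
              * mU2m qS qU2 u2 = mU1m qS qU1 u1 * mU2m qS qU2 u2 := by
          intro j hj
          rw [if_neg (Finset.mem_erase.mp hj).1]
        rw [Finset.sum_congr rfl hconst, Finset.sum_const, nsmul_eq_mul]
        have hcard : ((univ.erase j1).card : ℝ) ≤ (J1 : ℝ) := by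
          have := Finset.card_erase_le (s := (univ : Finset (Fin J1))) (a := j1)
          have h2 : ((univ : Finset (Fin J1)).card) = J1 := by
            rw [Finset.card_univ, Fintype.card_fin]
          exact_mod_cast le_trans this (le_of_eq h2)
        have hprodnn : (0:ℝ) ≤ mU1m qS qU1 u1 * mU2m qS qU2 u2 := mul_nonneg hm1 hm2
        nlinarith [mul_le_mul_of_nonneg_right hcard hprodnn]
end moments2
end BTaux
namespace BTaux
open Finset

section comps2
variable {β : Type} [Fintype β] {J : ℕ}

lemma Eind_ind (w : β → ℝ) (hw : ∑ b, w b = 1) {i i' : Fin J} (h : i ≠ i') (u v : β) :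
    ∑ f : Fin J → β, (∏ j, w (f j)) * (ind (f i = u) * ind (f i' = v)) = w u * w v := by
  rw [E_two w hw h (fun b => ind (b = u)) (fun b => ind (b = v)), sum_mul_ind, sum_mul_ind]

end comps2

section moments3
variable (qS : FinPMF (S1 × S2)) (qU1 : S1 → FinPMF U1) (qU2 : S2 → FinPMF U2)
variable (J1 J2 M1 M2 : ℕ)

/-- E[1_G Z2] ≤ m1 m2 (b + J2). -/
lemma momZ2 (hM1 : 1 ≤ M1) (hM2 : 1 ≤ M2) (s2 : S2) (u1 : U1) (u2 : U2)
    (j1 : Fin J1) (j2 : Fin J2) :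
    Expect qS qU1 qU2 J1 J2 M1 M2
      (fun θ => ind (θ.1 j1 = u1) * ind (θ.2.1 j2 = u2) * Z2 qS qU2 J2 s2 θ.2.1)
      ≤ mU1m qS qU1 u1 * mU2m qS qU2 u2 * (rb qS qU2 s2 u2 + J2) := by
  have hm1 := mU1m_nonneg qS qU1 u1
  have hm2 := mU2m_nonneg qS qU2 u2
  have e1 : Expect qS qU1 qU2 J1 J2 M1 M2
      (fun θ => ind (θ.1 j1 = u1) * ind (θ.2.1 j2 = u2) * Z2 qS qU2 J2 s2 θ.2.1)
      = ∑ j : Fin J2, Expect qS qU1 qU2 J1 J2 M1 M2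
          (fun θ => ind (θ.1 j1 = u1) * ind (θ.2.1 j2 = u2) * rb qS qU2 s2 (θ.2.1 j)) := by
    rw [← Expect_sum]
    apply Expect_congr
    intro θ
    unfold Z2
    rw [Finset.mul_sum]
  rw [e1]
  have hterm : ∀ j : Fin J2, Expect qS qU1 qU2 J1 J2 M1 M2
      (fun θ => ind (θ.1 j1 = u1) * ind (θ.2.1 j2 = u2) * rb qS qU2 s2 (θ.2.1 j))
      ≤ mU1m qS qU1 u1 * (if j = j2 then mU2m qS qU2 u2 * rb qS qU2 s2 u2 else mU2m qS qU2 u2) := by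
    intro j
    by_cases hj : j = j2
    · subst hj
      have h := Expect_eval qS qU1 qU2 J1 J2 M1 M2 hM1 hM2
        (fun θ => ind (θ.1 j1 = u1) * ind (θ.2.1 j = u2) * rb qS qU2 s2 (θ.2.1 j))
        (fun c1 => ind (c1 j1 = u1)) (fun c2 => ind (c2 j = u2) * rb qS qU2 s2 (c2 j))
        (fun _ => (1:ℝ)) (fun _ => (1:ℝ))
        (fun θ => by ring)
        (mU1m qS qU1 u1) (mU2m qS qU2 u2 * rb qS qU2 s2 u2) 1 1
        (Eind (mU1m qS qU1) (sum_mU1m qS qU1) j1 u1)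
        (Eind_at (mU2m qS qU2) (sum_mU2m qS qU2) j u2 (rb qS qU2 s2))
        (sum_wb1_mul_one J1 M1 hM1) (sum_wb2_mul_one J2 M2 hM2)
      rw [h, if_pos rfl]
      apply le_of_eq
      ring
    · have h := Expect_eval qS qU1 qU2 J1 J2 M1 M2 hM1 hM2
        (fun θ => ind (θ.1 j1 = u1) * ind (θ.2.1 j2 = u2) * rb qS qU2 s2 (θ.2.1 j))
        (fun c1 => ind (c1 j1 = u1)) (fun c2 => ind (c2 j2 = u2) * rb qS qU2 s2 (c2 j))
        (fun _ => (1:ℝ)) (fun _ => (1:ℝ))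
        (fun θ => by ring)
        (mU1m qS qU1 u1) (mU2m qS qU2 u2 * ∑ b, mU2m qS qU2 b * rb qS qU2 s2 b) 1 1
        (Eind (mU1m qS qU1) (sum_mU1m qS qU1) j1 u1)
        (Eind_two (mU2m qS qU2) (sum_mU2m qS qU2) (fun hh => hj hh.symm) u2 (rb qS qU2 s2))
        (sum_wb1_mul_one J1 M1 hM1) (sum_wb2_mul_one J2 M2 hM2)
      rw [h, if_neg hj]
      have hsig := sig2_le_one qS qU2 s2
      calc mU1m qS qU1 u1 * (mU2m qS qU2 u2 * ∑ b, mU2m qS qU2 b * rb qS qU2 s2 b) * 1 * 1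
          = mU1m qS qU1 u1 * mU2m qS qU2 u2 * (∑ b, mU2m qS qU2 b * rb qS qU2 s2 b) := by ring
        _ ≤ mU1m qS qU1 u1 * mU2m qS qU2 u2 * 1 :=
            mul_le_mul_of_nonneg_left hsig (mul_nonneg hm1 hm2)
        _ = mU1m qS qU1 u1 * mU2m qS qU2 u2 := mul_one _
  calc ∑ j : Fin J2, Expect qS qU1 qU2 J1 J2 M1 M2
        (fun θ => ind (θ.1 j1 = u1) * ind (θ.2.1 j2 = u2) * rb qS qU2 s2 (θ.2.1 j))
      ≤ ∑ j : Fin J2, mU1m qS qU1 u1 *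
          (if j = j2 then mU2m qS qU2 u2 * rb qS qU2 s2 u2 else mU2m qS qU2 u2) :=
        Finset.sum_le_sum fun j _ => hterm j
    _ ≤ mU1m qS qU1 u1 * mU2m qS qU2 u2 * (rb qS qU2 s2 u2 + J2) := by
        rw [← Finset.add_sum_erase univ _ (mem_univ j2), if_pos rfl]
        have hconst : ∀ j ∈ univ.erase j2,
            mU1m qS qU1 u1 * (if j = j2 then mU2m qS qU2 u2 * rb qS qU2 s2 u2 else mU2m qS qU2 u2)
              = mU1m qS qU1 u1 * mU2m qS qU2 u2 := by
          intro j hj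
          rw [if_neg (Finset.mem_erase.mp hj).1]
        rw [Finset.sum_congr rfl hconst, Finset.sum_const, nsmul_eq_mul]
        have hcard : ((univ.erase j2).card : ℝ) ≤ (J2 : ℝ) := by
          have := Finset.card_erase_le (s := (univ : Finset (Fin J2))) (a := j2)
          have h2 : ((univ : Finset (Fin J2)).card) = J2 := by
            rw [Finset.card_univ, Fintype.card_fin]
          exact_mod_cast le_trans this (le_of_eq h2)
        have hprodnn : (0:ℝ) ≤ mU1m qS qU1 u1 * mU2m qS qU2 u2 := mul_nonneg hm1 hm2
        nlinarith [mul_le_mul_of_nonneg_right hcard hprodnn]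

end moments3
end BTaux
namespace BTaux
open Finset

section moments4
variable (qS : FinPMF (S1 × S2)) (qU1 : S1 → FinPMF U1) (qU2 : S2 → FinPMF U2)
variable (J1 J2 M1 M2 : ℕ)

lemma sum_erase_const_le {J : ℕ} (j : Fin J) (c : ℝ) (hc : 0 ≤ c) :
    ∑ _x ∈ (univ.erase j : Finset (Fin J)), c ≤ (J:ℝ) * c := by
  rw [Finset.sum_const, nsmul_eq_mul]
  have hcard : ((univ.erase j).card : ℝ) ≤ (J : ℝ) := by
    have h1 := Finset.card_erase_le (s := (univ : Finset (Fin J))) (a := j)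
    have h2 : ((univ : Finset (Fin J)).card) = J := by
      rw [Finset.card_univ, Fintype.card_fin]
    exact_mod_cast le_trans h1 (le_of_eq h2)
  exact mul_le_mul_of_nonneg_right hcard hc

/-- E[1_G W] ≤ m1 m2 (rc + K). -/
lemma momW (hM1 : 1 ≤ M1) (hM2 : 1 ≤ M2) (u1 : U1) (u2 : U2)
    (j1 : Fin J1) (j2 : Fin J2) :
    Expect qS qU1 qU2 J1 J2 M1 M2
      (fun θ => ind (θ.1 j1 = u1) * ind (θ.2.1 j2 = u2) * Wt qS qU1 qU2 J1 J2 M1 M2 θ j1 j2)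
      ≤ mU1m qS qU1 u1 * mU2m qS qU2 u2 *
        (rc qS qU1 qU2 u1 u2 +
          ((J2:ℝ) * (M2:ℝ)⁻¹ + (J1:ℝ) * (M1:ℝ)⁻¹ + (J1:ℝ) * (J2:ℝ) * ((M1:ℝ) * (M2:ℝ))⁻¹)) := by
  have hm1 := mU1m_nonneg qS qU1 u1
  have hm2 := mU2m_nonneg qS qU2 u2
  have hmm : (0:ℝ) ≤ mU1m qS qU1 u1 * mU2m qS qU2 u2 := mul_nonneg hm1 hm2
  have hM1R : (0:ℝ) < (M1:ℝ) := by exact_mod_cast Nat.lt_of_lt_of_le Nat.zero_lt_one hM1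
  have hM2R : (0:ℝ) < (M2:ℝ) := by exact_mod_cast Nat.lt_of_lt_of_le Nat.zero_lt_one hM2
  -- expand Wt into a double sum of expectations
  have e1 : Expect qS qU1 qU2 J1 J2 M1 M2
      (fun θ => ind (θ.1 j1 = u1) * ind (θ.2.1 j2 = u2) * Wt qS qU1 qU2 J1 J2 M1 M2 θ j1 j2)
      = ∑ j1' : Fin J1, ∑ j2' : Fin J2, Expect qS qU1 qU2 J1 J2 M1 M2
          (fun θ => ind (θ.1 j1 = u1) * ind (θ.2.1 j2 = u2) *
            (ind (θ.2.2.1 j1' = θ.2.2.1 j1) * ind (θ.2.2.2 j2' = θ.2.2.2 j2) *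
              rc qS qU1 qU2 (θ.1 j1') (θ.2.1 j2'))) := by
    have hpt : ∀ θ : Om U1 U2 J1 J2 M1 M2,
        ind (θ.1 j1 = u1) * ind (θ.2.1 j2 = u2) * Wt qS qU1 qU2 J1 J2 M1 M2 θ j1 j2
        = ∑ j1' : Fin J1, ∑ j2' : Fin J2, ind (θ.1 j1 = u1) * ind (θ.2.1 j2 = u2) *
            (ind (θ.2.2.1 j1' = θ.2.2.1 j1) * ind (θ.2.2.2 j2' = θ.2.2.2 j2) *
              rc qS qU1 qU2 (θ.1 j1') (θ.2.1 j2')) := by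
      intro θ
      unfold Wt WB
      rw [Finset.mul_sum]
      refine Finset.sum_congr rfl fun j1' _ => ?_
      rw [Finset.mul_sum]
    rw [Expect_congr qS qU1 qU2 J1 J2 M1 M2 hpt]
    rw [Expect_sum qS qU1 qU2 J1 J2 M1 M2
      (fun j1' θ => ∑ j2' : Fin J2, ind (θ.1 j1 = u1) * ind (θ.2.1 j2 = u2) *
        (ind (θ.2.2.1 j1' = θ.2.2.1 j1) * ind (θ.2.2.2 j2' = θ.2.2.2 j2) *
          rc qS qU1 qU2 (θ.1 j1') (θ.2.1 j2')))]
    exact Finset.sum_congr rfl fun j1' _ => Expect_sum qS qU1 qU2 J1 J2 M1 M2 _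
  rw [e1]
  -- case bounds
  have hcaseA : Expect qS qU1 qU2 J1 J2 M1 M2
      (fun θ => ind (θ.1 j1 = u1) * ind (θ.2.1 j2 = u2) *
        (ind (θ.2.2.1 j1 = θ.2.2.1 j1) * ind (θ.2.2.2 j2 = θ.2.2.2 j2) *
          rc qS qU1 qU2 (θ.1 j1) (θ.2.1 j2)))
      ≤ mU1m qS qU1 u1 * mU2m qS qU2 u2 * rc qS qU1 qU2 u1 u2 := by
    have hcongr : ∀ θ : Om U1 U2 J1 J2 M1 M2,
        ind (θ.1 j1 = u1) * ind (θ.2.1 j2 = u2) *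
          (ind (θ.2.2.1 j1 = θ.2.2.1 j1) * ind (θ.2.2.2 j2 = θ.2.2.2 j2) *
            rc qS qU1 qU2 (θ.1 j1) (θ.2.1 j2))
        = rc qS qU1 qU2 u1 u2 * (ind (θ.1 j1 = u1) * ind (θ.2.1 j2 = u2)) := by
      intro θ
      rw [ind_rfl, ind_rfl, one_mul, one_mul]
      by_cases hx : θ.1 j1 = u1
      · by_cases hy : θ.2.1 j2 = u2
        · rw [hx, hy]; ring
        · simp [ind, hy]
      · simp [ind, hx]
    rw [Expect_congr qS qU1 qU2 J1 J2 M1 M2 hcongr, Expect_const_mul,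
      momG qS qU1 qU2 J1 J2 M1 M2 hM1 hM2 u1 u2 j1 j2]
    apply le_of_eq
    ring
  have hcaseB : ∀ j2' : Fin J2, j2' ≠ j2 → Expect qS qU1 qU2 J1 J2 M1 M2
      (fun θ => ind (θ.1 j1 = u1) * ind (θ.2.1 j2 = u2) *
        (ind (θ.2.2.1 j1 = θ.2.2.1 j1) * ind (θ.2.2.2 j2' = θ.2.2.2 j2) *
          rc qS qU1 qU2 (θ.1 j1) (θ.2.1 j2')))
      ≤ mU1m qS qU1 u1 * mU2m qS qU2 u2 * (M2:ℝ)⁻¹ := by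
    intro j2' hj2'
    have hcongr : ∀ θ : Om U1 U2 J1 J2 M1 M2,
        ind (θ.1 j1 = u1) * ind (θ.2.1 j2 = u2) *
          (ind (θ.2.2.1 j1 = θ.2.2.1 j1) * ind (θ.2.2.2 j2' = θ.2.2.2 j2) *
            rc qS qU1 qU2 (θ.1 j1) (θ.2.1 j2'))
        = (fun c1 => ind (c1 j1 = u1)) θ.1 *
          ((fun c2 => ind (c2 j2 = u2) * rc qS qU1 qU2 u1 (c2 j2')) θ.2.1) *
          ((fun _ => (1:ℝ)) θ.2.2.1) * ((fun b2 => ind (b2 j2' = b2 j2)) θ.2.2.2) := by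
      intro θ
      simp only [ind_rfl, ind_true]
      by_cases hx : θ.1 j1 = u1
      · rw [hx]; ring
      · simp [ind, hx]
    have h := Expect_eval qS qU1 qU2 J1 J2 M1 M2 hM1 hM2 _
      (fun c1 => ind (c1 j1 = u1))
      (fun c2 => ind (c2 j2 = u2) * rc qS qU1 qU2 u1 (c2 j2'))
      (fun _ => (1:ℝ)) (fun b2 => ind (b2 j2' = b2 j2))
      hcongr
      (mU1m qS qU1 u1) (mU2m qS qU2 u2 * ∑ b, mU2m qS qU2 b * rc qS qU1 qU2 u1 b) 1 ((M2:ℝ)⁻¹)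
      (Eind (mU1m qS qU1) (sum_mU1m qS qU1) j1 u1)
      (Eind_two (mU2m qS qU2) (sum_mU2m qS qU2) (fun hh => hj2' hh.symm) u2
        (fun b => rc qS qU1 qU2 u1 b))
      (sum_wb1_mul_one J1 M1 hM1)
      (Epair_unif hM2 hj2')
    rw [h]
    have hrow := rowB qS qU1 qU2 u1
    have hrownn : (0:ℝ) ≤ ∑ b, mU2m qS qU2 b * rc qS qU1 qU2 u1 b :=
      Finset.sum_nonneg fun b _ =>
        mul_nonneg (mU2m_nonneg qS qU2 b) (rc_nonneg qS qU1 qU2 u1 b)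
    calc mU1m qS qU1 u1 * (mU2m qS qU2 u2 * ∑ b, mU2m qS qU2 b * rc qS qU1 qU2 u1 b) * 1 * (M2:ℝ)⁻¹
        = (mU1m qS qU1 u1 * mU2m qS qU2 u2 * (M2:ℝ)⁻¹) * (∑ b, mU2m qS qU2 b * rc qS qU1 qU2 u1 b) := by
          ring
      _ ≤ (mU1m qS qU1 u1 * mU2m qS qU2 u2 * (M2:ℝ)⁻¹) * 1 := by
          apply mul_le_mul_of_nonneg_left hrow
          positivity
      _ = mU1m qS qU1 u1 * mU2m qS qU2 u2 * (M2:ℝ)⁻¹ := mul_one _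
  have hcaseC : ∀ j1' : Fin J1, j1' ≠ j1 → Expect qS qU1 qU2 J1 J2 M1 M2
      (fun θ => ind (θ.1 j1 = u1) * ind (θ.2.1 j2 = u2) *
        (ind (θ.2.2.1 j1' = θ.2.2.1 j1) * ind (θ.2.2.2 j2 = θ.2.2.2 j2) *
          rc qS qU1 qU2 (θ.1 j1') (θ.2.1 j2)))
      ≤ mU1m qS qU1 u1 * mU2m qS qU2 u2 * (M1:ℝ)⁻¹ := by
    intro j1' hj1'
    have hcongr : ∀ θ : Om U1 U2 J1 J2 M1 M2,
        ind (θ.1 j1 = u1) * ind (θ.2.1 j2 = u2) *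
          (ind (θ.2.2.1 j1' = θ.2.2.1 j1) * ind (θ.2.2.2 j2 = θ.2.2.2 j2) *
            rc qS qU1 qU2 (θ.1 j1') (θ.2.1 j2))
        = (fun c1 => ind (c1 j1 = u1) * rc qS qU1 qU2 (c1 j1') u2) θ.1 *
          ((fun c2 => ind (c2 j2 = u2)) θ.2.1) *
          ((fun b1 => ind (b1 j1' = b1 j1)) θ.2.2.1) * ((fun _ => (1:ℝ)) θ.2.2.2) := by
      intro θ
      simp only [ind_rfl, ind_true]
      by_cases hy : θ.2.1 j2 = u2
      · rw [hy]; ring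
      · simp [ind, hy]
    have h := Expect_eval qS qU1 qU2 J1 J2 M1 M2 hM1 hM2 _
      (fun c1 => ind (c1 j1 = u1) * rc qS qU1 qU2 (c1 j1') u2)
      (fun c2 => ind (c2 j2 = u2))
      (fun b1 => ind (b1 j1' = b1 j1)) (fun _ => (1:ℝ))
      hcongr
      (mU1m qS qU1 u1 * ∑ b, mU1m qS qU1 b * rc qS qU1 qU2 b u2) (mU2m qS qU2 u2)
      ((M1:ℝ)⁻¹) 1
      (Eind_two (mU1m qS qU1) (sum_mU1m qS qU1) (fun hh => hj1' hh.symm) u1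
        (fun b => rc qS qU1 qU2 b u2))
      (Eind (mU2m qS qU2) (sum_mU2m qS qU2) j2 u2)
      (Epair_unif hM1 hj1')
      (sum_wb2_mul_one J2 M2 hM2)
    rw [h]
    have hcol := colB qS qU1 qU2 u2
    calc mU1m qS qU1 u1 * (∑ b, mU1m qS qU1 b * rc qS qU1 qU2 b u2) * mU2m qS qU2 u2 * (M1:ℝ)⁻¹ * 1
        = (mU1m qS qU1 u1 * mU2m qS qU2 u2 * (M1:ℝ)⁻¹) * (∑ b, mU1m qS qU1 b * rc qS qU1 qU2 b u2) := by
          ring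
      _ ≤ (mU1m qS qU1 u1 * mU2m qS qU2 u2 * (M1:ℝ)⁻¹) * 1 := by
          apply mul_le_mul_of_nonneg_left hcol
          positivity
      _ = mU1m qS qU1 u1 * mU2m qS qU2 u2 * (M1:ℝ)⁻¹ := mul_one _
  have hcaseD : ∀ (j1' : Fin J1) (j2' : Fin J2), j1' ≠ j1 → j2' ≠ j2 →
      Expect qS qU1 qU2 J1 J2 M1 M2
      (fun θ => ind (θ.1 j1 = u1) * ind (θ.2.1 j2 = u2) *
        (ind (θ.2.2.1 j1' = θ.2.2.1 j1) * ind (θ.2.2.2 j2' = θ.2.2.2 j2) *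
          rc qS qU1 qU2 (θ.1 j1') (θ.2.1 j2')))
      ≤ mU1m qS qU1 u1 * mU2m qS qU2 u2 * ((M1:ℝ)⁻¹ * (M2:ℝ)⁻¹) := by
    intro j1' j2' hj1' hj2'
    -- partition over the value v of c1 j1'
    have hcongr : ∀ θ : Om U1 U2 J1 J2 M1 M2,
        ind (θ.1 j1 = u1) * ind (θ.2.1 j2 = u2) *
          (ind (θ.2.2.1 j1' = θ.2.2.1 j1) * ind (θ.2.2.2 j2' = θ.2.2.2 j2) *
            rc qS qU1 qU2 (θ.1 j1') (θ.2.1 j2'))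
        = ∑ v : U1,
            (fun c1 => ind (c1 j1 = u1) * ind (c1 j1' = v)) θ.1 *
            ((fun c2 => ind (c2 j2 = u2) * rc qS qU1 qU2 v (c2 j2')) θ.2.1) *
            ((fun b1 => ind (b1 j1' = b1 j1)) θ.2.2.1) *
            ((fun b2 => ind (b2 j2' = b2 j2)) θ.2.2.2) := by
      intro θ
      simp only []
      have hv := sum_ind_mul (θ.1 j1') (fun v => rc qS qU1 qU2 v (θ.2.1 j2'))
      calc ind (θ.1 j1 = u1) * ind (θ.2.1 j2 = u2) *
            (ind (θ.2.2.1 j1' = θ.2.2.1 j1) * ind (θ.2.2.2 j2' = θ.2.2.2 j2) *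
              rc qS qU1 qU2 (θ.1 j1') (θ.2.1 j2'))
          = (∑ v : U1, ind (θ.1 j1' = v) * rc qS qU1 qU2 v (θ.2.1 j2')) *
              (ind (θ.1 j1 = u1) * ind (θ.2.1 j2 = u2) *
                (ind (θ.2.2.1 j1' = θ.2.2.1 j1) * ind (θ.2.2.2 j2' = θ.2.2.2 j2))) := by
            rw [hv]; ring
        _ = ∑ v : U1,
              ind (θ.1 j1 = u1) * ind (θ.1 j1' = v) *
              (ind (θ.2.1 j2 = u2) * rc qS qU1 qU2 v (θ.2.1 j2')) *
              ind (θ.2.2.1 j1' = θ.2.2.1 j1) * ind (θ.2.2.2 j2' = θ.2.2.2 j2) := by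
            rw [Finset.sum_mul]
            exact Finset.sum_congr rfl fun v _ => by ring
    have hsplit : Expect qS qU1 qU2 J1 J2 M1 M2
        (fun θ => ind (θ.1 j1 = u1) * ind (θ.2.1 j2 = u2) *
          (ind (θ.2.2.1 j1' = θ.2.2.1 j1) * ind (θ.2.2.2 j2' = θ.2.2.2 j2) *
            rc qS qU1 qU2 (θ.1 j1') (θ.2.1 j2')))
        = ∑ v : U1, Expect qS qU1 qU2 J1 J2 M1 M2
            (fun θ => (fun c1 => ind (c1 j1 = u1) * ind (c1 j1' = v)) θ.1 *
              ((fun c2 => ind (c2 j2 = u2) * rc qS qU1 qU2 v (c2 j2')) θ.2.1) *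
              ((fun b1 => ind (b1 j1' = b1 j1)) θ.2.2.1) *
              ((fun b2 => ind (b2 j2' = b2 j2)) θ.2.2.2)) := by
      rw [← Expect_sum]
      exact Expect_congr qS qU1 qU2 J1 J2 M1 M2 hcongr
    rw [hsplit]
    have hv : ∀ v : U1, Expect qS qU1 qU2 J1 J2 M1 M2
        (fun θ => (fun c1 => ind (c1 j1 = u1) * ind (c1 j1' = v)) θ.1 *
          ((fun c2 => ind (c2 j2 = u2) * rc qS qU1 qU2 v (c2 j2')) θ.2.1) *
          ((fun b1 => ind (b1 j1' = b1 j1)) θ.2.2.1) *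
          ((fun b2 => ind (b2 j2' = b2 j2)) θ.2.2.2))
        = (mU1m qS qU1 u1 * mU1m qS qU1 v) *
          (mU2m qS qU2 u2 * ∑ b, mU2m qS qU2 b * rc qS qU1 qU2 v b) *
          (M1:ℝ)⁻¹ * (M2:ℝ)⁻¹ := by
      intro v
      exact Expect_eval qS qU1 qU2 J1 J2 M1 M2 hM1 hM2 _
        (fun c1 => ind (c1 j1 = u1) * ind (c1 j1' = v))
        (fun c2 => ind (c2 j2 = u2) * rc qS qU1 qU2 v (c2 j2'))
        (fun b1 => ind (b1 j1' = b1 j1)) (fun b2 => ind (b2 j2' = b2 j2))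
        (fun θ => rfl)
        (mU1m qS qU1 u1 * mU1m qS qU1 v)
        (mU2m qS qU2 u2 * ∑ b, mU2m qS qU2 b * rc qS qU1 qU2 v b)
        ((M1:ℝ)⁻¹) ((M2:ℝ)⁻¹)
        (Eind_ind (mU1m qS qU1) (sum_mU1m qS qU1) (fun hh => hj1' hh.symm) u1 v)
        (Eind_two (mU2m qS qU2) (sum_mU2m qS qU2) (fun hh => hj2' hh.symm) u2
          (fun b => rc qS qU1 qU2 v b))
        (Epair_unif hM1 hj1')
        (Epair_unif hM2 hj2')
    rw [Finset.sum_congr rfl fun v _ => hv v]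
    have htot := totB qS qU1 qU2
    calc ∑ v : U1, (mU1m qS qU1 u1 * mU1m qS qU1 v) *
          (mU2m qS qU2 u2 * ∑ b, mU2m qS qU2 b * rc qS qU1 qU2 v b) * (M1:ℝ)⁻¹ * (M2:ℝ)⁻¹
        = (mU1m qS qU1 u1 * mU2m qS qU2 u2 * ((M1:ℝ)⁻¹ * (M2:ℝ)⁻¹)) *
            ∑ v : U1, mU1m qS qU1 v * ∑ b, mU2m qS qU2 b * rc qS qU1 qU2 v b := by
          rw [Finset.mul_sum]
          exact Finset.sum_congr rfl fun v _ => by ring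
      _ ≤ (mU1m qS qU1 u1 * mU2m qS qU2 u2 * ((M1:ℝ)⁻¹ * (M2:ℝ)⁻¹)) * 1 := by
          apply mul_le_mul_of_nonneg_left htot
          positivity
      _ = mU1m qS qU1 u1 * mU2m qS qU2 u2 * ((M1:ℝ)⁻¹ * (M2:ℝ)⁻¹) := mul_one _
  -- assemble
  have hj1sum : ∀ j1' : Fin J1, j1' ≠ j1 →
      ∑ j2' : Fin J2, Expect qS qU1 qU2 J1 J2 M1 M2
        (fun θ => ind (θ.1 j1 = u1) * ind (θ.2.1 j2 = u2) *
          (ind (θ.2.2.1 j1' = θ.2.2.1 j1) * ind (θ.2.2.2 j2' = θ.2.2.2 j2) *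
            rc qS qU1 qU2 (θ.1 j1') (θ.2.1 j2')))
      ≤ mU1m qS qU1 u1 * mU2m qS qU2 u2 * (M1:ℝ)⁻¹ +
        (J2:ℝ) * (mU1m qS qU1 u1 * mU2m qS qU2 u2 * ((M1:ℝ)⁻¹ * (M2:ℝ)⁻¹)) := by
    intro j1' hj1'
    rw [← Finset.add_sum_erase univ _ (mem_univ j2)]
    have h1 := hcaseC j1' hj1'
    have h2 : ∑ j2' ∈ univ.erase j2, Expect qS qU1 qU2 J1 J2 M1 M2
        (fun θ => ind (θ.1 j1 = u1) * ind (θ.2.1 j2 = u2) *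
          (ind (θ.2.2.1 j1' = θ.2.2.1 j1) * ind (θ.2.2.2 j2' = θ.2.2.2 j2) *
            rc qS qU1 qU2 (θ.1 j1') (θ.2.1 j2')))
        ≤ (J2:ℝ) * (mU1m qS qU1 u1 * mU2m qS qU2 u2 * ((M1:ℝ)⁻¹ * (M2:ℝ)⁻¹)) := by
      calc ∑ j2' ∈ univ.erase j2, Expect qS qU1 qU2 J1 J2 M1 M2
            (fun θ => ind (θ.1 j1 = u1) * ind (θ.2.1 j2 = u2) *
              (ind (θ.2.2.1 j1' = θ.2.2.1 j1) * ind (θ.2.2.2 j2' = θ.2.2.2 j2) *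
                rc qS qU1 qU2 (θ.1 j1') (θ.2.1 j2')))
          ≤ ∑ _j2' ∈ univ.erase j2,
              mU1m qS qU1 u1 * mU2m qS qU2 u2 * ((M1:ℝ)⁻¹ * (M2:ℝ)⁻¹) := by
            refine Finset.sum_le_sum fun j2' hj2' => ?_
            exact hcaseD j1' j2' hj1' (Finset.mem_erase.mp hj2').1
        _ ≤ (J2:ℝ) * (mU1m qS qU1 u1 * mU2m qS qU2 u2 * ((M1:ℝ)⁻¹ * (M2:ℝ)⁻¹)) := by
            apply sum_erase_const_le
            positivity
    exact add_le_add h1 h2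
  have hj1main : ∑ j2' : Fin J2, Expect qS qU1 qU2 J1 J2 M1 M2
      (fun θ => ind (θ.1 j1 = u1) * ind (θ.2.1 j2 = u2) *
        (ind (θ.2.2.1 j1 = θ.2.2.1 j1) * ind (θ.2.2.2 j2' = θ.2.2.2 j2) *
          rc qS qU1 qU2 (θ.1 j1) (θ.2.1 j2')))
      ≤ mU1m qS qU1 u1 * mU2m qS qU2 u2 * rc qS qU1 qU2 u1 u2 +
        (J2:ℝ) * (mU1m qS qU1 u1 * mU2m qS qU2 u2 * (M2:ℝ)⁻¹) := by
    rw [← Finset.add_sum_erase univ _ (mem_univ j2)]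
    have h2 : ∑ j2' ∈ univ.erase j2, Expect qS qU1 qU2 J1 J2 M1 M2
        (fun θ => ind (θ.1 j1 = u1) * ind (θ.2.1 j2 = u2) *
          (ind (θ.2.2.1 j1 = θ.2.2.1 j1) * ind (θ.2.2.2 j2' = θ.2.2.2 j2) *
            rc qS qU1 qU2 (θ.1 j1) (θ.2.1 j2')))
        ≤ (J2:ℝ) * (mU1m qS qU1 u1 * mU2m qS qU2 u2 * (M2:ℝ)⁻¹) := by
      calc ∑ j2' ∈ univ.erase j2, Expect qS qU1 qU2 J1 J2 M1 M2
            (fun θ => ind (θ.1 j1 = u1) * ind (θ.2.1 j2 = u2) *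
              (ind (θ.2.2.1 j1 = θ.2.2.1 j1) * ind (θ.2.2.2 j2' = θ.2.2.2 j2) *
                rc qS qU1 qU2 (θ.1 j1) (θ.2.1 j2')))
          ≤ ∑ _j2' ∈ univ.erase j2, mU1m qS qU1 u1 * mU2m qS qU2 u2 * (M2:ℝ)⁻¹ := by
            refine Finset.sum_le_sum fun j2' hj2' => ?_
            exact hcaseB j2' (Finset.mem_erase.mp hj2').1
        _ ≤ (J2:ℝ) * (mU1m qS qU1 u1 * mU2m qS qU2 u2 * (M2:ℝ)⁻¹) := by
            apply sum_erase_const_le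
            positivity
    exact add_le_add hcaseA h2
  have hrest : ∑ j1' ∈ univ.erase j1, ∑ j2' : Fin J2, Expect qS qU1 qU2 J1 J2 M1 M2
      (fun θ => ind (θ.1 j1 = u1) * ind (θ.2.1 j2 = u2) *
        (ind (θ.2.2.1 j1' = θ.2.2.1 j1) * ind (θ.2.2.2 j2' = θ.2.2.2 j2) *
          rc qS qU1 qU2 (θ.1 j1') (θ.2.1 j2')))
      ≤ (J1:ℝ) * (mU1m qS qU1 u1 * mU2m qS qU2 u2 * (M1:ℝ)⁻¹ +
        (J2:ℝ) * (mU1m qS qU1 u1 * mU2m qS qU2 u2 * ((M1:ℝ)⁻¹ * (M2:ℝ)⁻¹))) := by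
    calc ∑ j1' ∈ univ.erase j1, ∑ j2' : Fin J2, Expect qS qU1 qU2 J1 J2 M1 M2
            (fun θ => ind (θ.1 j1 = u1) * ind (θ.2.1 j2 = u2) *
              (ind (θ.2.2.1 j1' = θ.2.2.1 j1) * ind (θ.2.2.2 j2' = θ.2.2.2 j2) *
                rc qS qU1 qU2 (θ.1 j1') (θ.2.1 j2')))
        ≤ ∑ _j1' ∈ univ.erase j1,
            (mU1m qS qU1 u1 * mU2m qS qU2 u2 * (M1:ℝ)⁻¹ +
              (J2:ℝ) * (mU1m qS qU1 u1 * mU2m qS qU2 u2 * ((M1:ℝ)⁻¹ * (M2:ℝ)⁻¹))) := by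
          refine Finset.sum_le_sum fun j1' hj1' => ?_
          exact hj1sum j1' (Finset.mem_erase.mp hj1').1
      _ ≤ (J1:ℝ) * (mU1m qS qU1 u1 * mU2m qS qU2 u2 * (M1:ℝ)⁻¹ +
            (J2:ℝ) * (mU1m qS qU1 u1 * mU2m qS qU2 u2 * ((M1:ℝ)⁻¹ * (M2:ℝ)⁻¹))) := by
          apply sum_erase_const_le
          positivity
  calc ∑ j1' : Fin J1, ∑ j2' : Fin J2, Expect qS qU1 qU2 J1 J2 M1 M2
        (fun θ => ind (θ.1 j1 = u1) * ind (θ.2.1 j2 = u2) *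
          (ind (θ.2.2.1 j1' = θ.2.2.1 j1) * ind (θ.2.2.2 j2' = θ.2.2.2 j2) *
            rc qS qU1 qU2 (θ.1 j1') (θ.2.1 j2')))
      = (∑ j2' : Fin J2, Expect qS qU1 qU2 J1 J2 M1 M2
          (fun θ => ind (θ.1 j1 = u1) * ind (θ.2.1 j2 = u2) *
            (ind (θ.2.2.1 j1 = θ.2.2.1 j1) * ind (θ.2.2.2 j2' = θ.2.2.2 j2) *
              rc qS qU1 qU2 (θ.1 j1) (θ.2.1 j2')))) +
        ∑ j1' ∈ univ.erase j1, ∑ j2' : Fin J2, Expect qS qU1 qU2 J1 J2 M1 M2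
          (fun θ => ind (θ.1 j1 = u1) * ind (θ.2.1 j2 = u2) *
            (ind (θ.2.2.1 j1' = θ.2.2.1 j1) * ind (θ.2.2.2 j2' = θ.2.2.2 j2) *
              rc qS qU1 qU2 (θ.1 j1') (θ.2.1 j2'))) := by
        rw [← Finset.add_sum_erase univ _ (mem_univ j1)]
    _ ≤ (mU1m qS qU1 u1 * mU2m qS qU2 u2 * rc qS qU1 qU2 u1 u2 +
          (J2:ℝ) * (mU1m qS qU1 u1 * mU2m qS qU2 u2 * (M2:ℝ)⁻¹)) +
        (J1:ℝ) * (mU1m qS qU1 u1 * mU2m qS qU2 u2 * (M1:ℝ)⁻¹ +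
          (J2:ℝ) * (mU1m qS qU1 u1 * mU2m qS qU2 u2 * ((M1:ℝ)⁻¹ * (M2:ℝ)⁻¹))) :=
        add_le_add hj1main hrest
    _ ≤ mU1m qS qU1 u1 * mU2m qS qU2 u2 *
        (rc qS qU1 qU2 u1 u2 +
          ((J2:ℝ) * (M2:ℝ)⁻¹ + (J1:ℝ) * (M1:ℝ)⁻¹ + (J1:ℝ) * (J2:ℝ) * ((M1:ℝ) * (M2:ℝ))⁻¹)) := by
        rw [mul_inv]
        apply le_of_eq
        ring

end moments4
end BTaux
namespace BTaux
open Finset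

section core
variable (qS : FinPMF (S1 × S2)) (qU1 : S1 → FinPMF U1) (qU2 : S2 → FinPMF U2)
variable (J1 J2 M1 M2 : ℕ)

noncomputable def Kc (J1 J2 M1 M2 : ℕ) : ℝ :=
  (J2:ℝ) * (M2:ℝ)⁻¹ + (J1:ℝ) * (M1:ℝ)⁻¹ + (J1:ℝ) * (J2:ℝ) * ((M1:ℝ) * (M2:ℝ))⁻¹

lemma Kc_pos (hM1 : 1 ≤ M1) (hM2 : 1 ≤ M2) (hJ1 : 1 ≤ J1) (hJ2 : 1 ≤ J2) :
    0 < Kc J1 J2 M1 M2 := by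
  have h1 : (0:ℝ) < (M1:ℝ) := by exact_mod_cast Nat.lt_of_lt_of_le Nat.zero_lt_one hM1
  have h2 : (0:ℝ) < (M2:ℝ) := by exact_mod_cast Nat.lt_of_lt_of_le Nat.zero_lt_one hM2
  have h3 : (0:ℝ) < (J1:ℝ) := by exact_mod_cast Nat.lt_of_lt_of_le Nat.zero_lt_one hJ1
  have h4 : (0:ℝ) < (J2:ℝ) := by exact_mod_cast Nat.lt_of_lt_of_le Nat.zero_lt_one hJ2
  unfold Kc
  positivity

/-- The integrand of the core expectation. -/
noncomputable def CoreF (s1 : S1) (s2 : S2) (j1 : Fin J1) (j2 : Fin J2)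
    (θ : Om U1 U2 J1 J2 M1 M2) : ℝ :=
  ra qS qU1 s1 (θ.1 j1) / Z1 qS qU1 J1 s1 θ.1 *
    (rb qS qU2 s2 (θ.2.1 j2) / Z2 qS qU2 J2 s2 θ.2.1) *
    (rc qS qU1 qU2 (θ.1 j1) (θ.2.1 j2) / Wt qS qU1 qU2 J1 J2 M1 M2 θ j1 j2)

lemma CoreF_nonneg (s1 s2 j1 j2 θ) : 0 ≤ CoreF qS qU1 qU2 J1 J2 M1 M2 s1 s2 j1 j2 θ := by
  unfold CoreF
  have h1 := div_nonneg (ra_nonneg qS qU1 s1 (θ.1 j1)) (Z1_nonneg qS qU1 J1 s1 θ.1)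
  have h2 := div_nonneg (rb_nonneg qS qU2 s2 (θ.2.1 j2)) (Z2_nonneg qS qU2 J2 s2 θ.2.1)
  have h3 := div_nonneg (rc_nonneg qS qU1 qU2 (θ.1 j1) (θ.2.1 j2))
    (Wt_nonneg qS qU1 qU2 J1 J2 M1 M2 θ j1 j2)
  positivity

lemma Expect_lin4 (c α β γ : ℝ) (F0 F1 F2 F3 : Om U1 U2 J1 J2 M1 M2 → ℝ) :
    Expect qS qU1 qU2 J1 J2 M1 M2
      (fun θ => c * (4 * F0 θ - F1 θ * α - F2 θ * β - F3 θ * γ))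
    = c * (4 * Expect qS qU1 qU2 J1 J2 M1 M2 F0
        - Expect qS qU1 qU2 J1 J2 M1 M2 F1 * α
        - Expect qS qU1 qU2 J1 J2 M1 M2 F2 * β
        - Expect qS qU1 qU2 J1 J2 M1 M2 F3 * γ) := by
  unfold Expect
  have h : ∀ θ ∈ (univ : Finset (Om U1 U2 J1 J2 M1 M2)),
      muBT qS qU1 qU2 J1 J2 M1 M2 θ * (c * (4 * F0 θ - F1 θ * α - F2 θ * β - F3 θ * γ))
      = (c * 4) * (muBT qS qU1 qU2 J1 J2 M1 M2 θ * F0 θ)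
        - (c * α) * (muBT qS qU1 qU2 J1 J2 M1 M2 θ * F1 θ)
        - (c * β) * (muBT qS qU1 qU2 J1 J2 M1 M2 θ * F2 θ)
        - (c * γ) * (muBT qS qU1 qU2 J1 J2 M1 M2 θ * F3 θ) := by
    intro θ _
    ring
  rw [Finset.sum_congr rfl h, Finset.sum_sub_distrib, Finset.sum_sub_distrib,
    Finset.sum_sub_distrib, ← Finset.mul_sum, ← Finset.mul_sum, ← Finset.mul_sum,
    ← Finset.mul_sum]
  ring

lemma coreBound (hM1 : 1 ≤ M1) (hM2 : 1 ≤ M2) (hJ1 : 1 ≤ J1) (hJ2 : 1 ≤ J2)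
    (s1 : S1) (s2 : S2) (u1 : U1) (u2 : U2) (j1 : Fin J1) (j2 : Fin J2) :
    mU1m qS qU1 u1 * mU2m qS qU2 u2 *
      (ra qS qU1 s1 u1 * rb qS qU2 s2 u2 * rc qS qU1 qU2 u1 u2) *
      ((ra qS qU1 s1 u1 + J1) * (rb qS qU2 s2 u2 + J2) *
        (rc qS qU1 qU2 u1 u2 + Kc J1 J2 M1 M2))⁻¹
    ≤ Expect qS qU1 qU2 J1 J2 M1 M2 (fun θ =>
        ind (θ.1 j1 = u1) * ind (θ.2.1 j2 = u2) *
          CoreF qS qU1 qU2 J1 J2 M1 M2 s1 s2 j1 j2 θ) := by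
  have hFnn : ∀ θ : Om U1 U2 J1 J2 M1 M2, 0 ≤
      ind (θ.1 j1 = u1) * ind (θ.2.1 j2 = u2) *
        CoreF qS qU1 qU2 J1 J2 M1 M2 s1 s2 j1 j2 θ := fun θ =>
    mul_nonneg (mul_nonneg (ind_nonneg _) (ind_nonneg _))
      (CoreF_nonneg qS qU1 qU2 J1 J2 M1 M2 s1 s2 j1 j2 θ)
  have hEnn := Expect_nonneg qS qU1 qU2 J1 J2 M1 M2 hFnn
  rcases eq_or_lt_of_le (ra_nonneg qS qU1 s1 u1) with ha | ha
  · rw [← ha]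
    simpa using hEnn
  rcases eq_or_lt_of_le (rb_nonneg qS qU2 s2 u2) with hb | hb
  · rw [← hb]
    simpa using hEnn
  rcases eq_or_lt_of_le (rc_nonneg qS qU1 qU2 u1 u2) with hc | hc
  · rw [← hc]
    simpa using hEnn
  -- main case : a, b, r > 0
  have hKc := Kc_pos J1 J2 M1 M2 hM1 hM2 hJ1 hJ2
  have hJ1R : (1:ℝ) ≤ (J1:ℝ) := by exact_mod_cast hJ1
  have hJ2R : (1:ℝ) ≤ (J2:ℝ) := by exact_mod_cast hJ2
  set a := ra qS qU1 s1 u1 with hadef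
  set b := rb qS qU2 s2 u2 with hbdef
  set r := rc qS qU1 qU2 u1 u2 with hcdef
  have hp : (0:ℝ) < a + J1 := by linarith
  have hq : (0:ℝ) < b + J2 := by linarith
  have hw : (0:ℝ) < r + Kc J1 J2 M1 M2 := by linarith
  set p := a + (J1:ℝ) with hpdef
  set q := b + (J2:ℝ) with hqdef
  set w := r + Kc J1 J2 M1 M2 with hwdef
  set C := a * b * r * (p * q * w)⁻¹ with hCdef
  have hCnn : 0 ≤ C := by positivity
  -- pointwise bound
  have hpt : ∀ θ : Om U1 U2 J1 J2 M1 M2,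
      C * (4 * (ind (θ.1 j1 = u1) * ind (θ.2.1 j2 = u2))
        - (ind (θ.1 j1 = u1) * ind (θ.2.1 j2 = u2) * Z1 qS qU1 J1 s1 θ.1) * p⁻¹
        - (ind (θ.1 j1 = u1) * ind (θ.2.1 j2 = u2) * Z2 qS qU2 J2 s2 θ.2.1) * q⁻¹
        - (ind (θ.1 j1 = u1) * ind (θ.2.1 j2 = u2) * Wt qS qU1 qU2 J1 J2 M1 M2 θ j1 j2) * w⁻¹)
      ≤ ind (θ.1 j1 = u1) * ind (θ.2.1 j2 = u2) *
          CoreF qS qU1 qU2 J1 J2 M1 M2 s1 s2 j1 j2 θ := by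
    intro θ
    by_cases hx : θ.1 j1 = u1
    · by_cases hy : θ.2.1 j2 = u2
      · have h1 := Z1_ge qS qU1 J1 s1 θ.1 j1
        rw [hx] at h1
        have h2 := Z2_ge qS qU2 J2 s2 θ.2.1 j2
        rw [hy] at h2
        have h3 := Wt_ge qS qU1 qU2 J1 J2 M1 M2 θ j1 j2
        rw [hx, hy] at h3
        have hZ1 : 0 < Z1 qS qU1 J1 s1 θ.1 := lt_of_lt_of_le ha h1
        have hZ2 : 0 < Z2 qS qU2 J2 s2 θ.2.1 := lt_of_lt_of_le hb h2
        have hW : 0 < Wt qS qU1 qU2 J1 J2 M1 M2 θ j1 j2 := lt_of_lt_of_le hc h3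
        have key := amgm_tangent hZ1 hZ2 hW hp hq hw
        unfold CoreF
        rw [hx, hy, ind_rfl, ind_rfl]
        have habr : (0:ℝ) ≤ a * b * r := by positivity
        calc C * (4 * (1 * 1) - 1 * 1 * Z1 qS qU1 J1 s1 θ.1 * p⁻¹
              - 1 * 1 * Z2 qS qU2 J2 s2 θ.2.1 * q⁻¹
              - 1 * 1 * Wt qS qU1 qU2 J1 J2 M1 M2 θ j1 j2 * w⁻¹)
            = (a * b * r) * ((p * q * w)⁻¹ *
                (4 - Z1 qS qU1 J1 s1 θ.1 / p - Z2 qS qU2 J2 s2 θ.2.1 / q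
                  - Wt qS qU1 qU2 J1 J2 M1 M2 θ j1 j2 / w)) := by
              rw [hCdef]
              field_simp
          _ ≤ (a * b * r) * (Z1 qS qU1 J1 s1 θ.1 * Z2 qS qU2 J2 s2 θ.2.1 *
                Wt qS qU1 qU2 J1 J2 M1 M2 θ j1 j2)⁻¹ :=
              mul_le_mul_of_nonneg_left key habr
          _ = 1 * 1 * (a / Z1 qS qU1 J1 s1 θ.1 * (b / Z2 qS qU2 J2 s2 θ.2.1) *
                (r / Wt qS qU1 qU2 J1 J2 M1 M2 θ j1 j2)) := by
              field_simp
      · have hI : ind (θ.1 j1 = u1) * ind (θ.2.1 j2 = u2) = 0 := by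
          simp [ind, hy]
        rw [hI]
        simp
    · have hI : ind (θ.1 j1 = u1) * ind (θ.2.1 j2 = u2) = 0 := by
        simp [ind, hx]
      rw [hI]
      simp
  -- integrate the pointwise bound
  have hmono := Expect_mono qS qU1 qU2 J1 J2 M1 M2 hpt
  rw [Expect_lin4] at hmono
  -- moment bounds
  have hG := momG qS qU1 qU2 J1 J2 M1 M2 hM1 hM2 u1 u2 j1 j2
  have hZ1m := momZ1 qS qU1 qU2 J1 J2 M1 M2 hM1 hM2 s1 u1 u2 j1 j2
  have hZ2m := momZ2 qS qU1 qU2 J1 J2 M1 M2 hM1 hM2 s2 u1 u2 j1 j2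
  have hWm := momW qS qU1 qU2 J1 J2 M1 M2 hM1 hM2 u1 u2 j1 j2
  rw [hG] at hmono
  set m12 := mU1m qS qU1 u1 * mU2m qS qU2 u2 with hm12def
  have hm12nn : 0 ≤ m12 := by
    rw [hm12def]
    exact mul_nonneg (mU1m_nonneg qS qU1 u1) (mU2m_nonneg qS qU2 u2)
  have hb1 : Expect qS qU1 qU2 J1 J2 M1 M2
      (fun θ => ind (θ.1 j1 = u1) * ind (θ.2.1 j2 = u2) * Z1 qS qU1 J1 s1 θ.1) * p⁻¹
      ≤ m12 := by
    have h2 : m12 * (ra qS qU1 s1 u1 + J1) * p⁻¹ = m12 := by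
      rw [hpdef, hadef]
      field_simp
      exact mul_div_cancel_right₀ _ hp.ne'
    rw [← h2]
    apply mul_le_mul_of_nonneg_right _ (le_of_lt (inv_pos.mpr hp))
    exact hZ1m
  have hb2 : Expect qS qU1 qU2 J1 J2 M1 M2
      (fun θ => ind (θ.1 j1 = u1) * ind (θ.2.1 j2 = u2) * Z2 qS qU2 J2 s2 θ.2.1) * q⁻¹
      ≤ m12 := by
    have h2 : m12 * (rb qS qU2 s2 u2 + J2) * q⁻¹ = m12 := by
      rw [hqdef, hbdef]
      field_simp
      exact mul_div_cancel_right₀ _ hq.ne'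
    rw [← h2]
    apply mul_le_mul_of_nonneg_right _ (le_of_lt (inv_pos.mpr hq))
    exact hZ2m
  have hb3 : Expect qS qU1 qU2 J1 J2 M1 M2
      (fun θ => ind (θ.1 j1 = u1) * ind (θ.2.1 j2 = u2) * Wt qS qU1 qU2 J1 J2 M1 M2 θ j1 j2) * w⁻¹
      ≤ m12 := by
    have h2 : m12 * (rc qS qU1 qU2 u1 u2 + Kc J1 J2 M1 M2) * w⁻¹ = m12 := by
      rw [hwdef, hcdef]
      field_simp
      exact mul_div_cancel_right₀ _ hw.ne'
    rw [← h2]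
    apply mul_le_mul_of_nonneg_right _ (le_of_lt (inv_pos.mpr hw))
    exact hWm
  have hfinal : C * m12 ≤ C * (4 * m12
      - Expect qS qU1 qU2 J1 J2 M1 M2
          (fun θ => ind (θ.1 j1 = u1) * ind (θ.2.1 j2 = u2) * Z1 qS qU1 J1 s1 θ.1) * p⁻¹
      - Expect qS qU1 qU2 J1 J2 M1 M2
          (fun θ => ind (θ.1 j1 = u1) * ind (θ.2.1 j2 = u2) * Z2 qS qU2 J2 s2 θ.2.1) * q⁻¹
      - Expect qS qU1 qU2 J1 J2 M1 M2
          (fun θ => ind (θ.1 j1 = u1) * ind (θ.2.1 j2 = u2) *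
            Wt qS qU1 qU2 J1 J2 M1 M2 θ j1 j2) * w⁻¹) := by
    apply mul_le_mul_of_nonneg_left _ hCnn
    linarith
  have hLHS : mU1m qS qU1 u1 * mU2m qS qU2 u2 * (a * b * r) *
      ((a + ↑J1) * (b + ↑J2) * (r + Kc J1 J2 M1 M2))⁻¹ = C * m12 := by
    rw [hCdef, hm12def, hpdef, hqdef, hwdef]
    ring
  rw [hLHS]
  exact le_trans hfinal hmono

end core
end BTaux
namespace BTaux
open Finset

section ftil
variable (qS : FinPMF (S1 × S2)) (qU1 : S1 → FinPMF U1) (qU2 : S2 → FinPMF U2)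
variable (d1 : S1 → R1 → ℝ) (d2 : S2 → R2 → ℝ) (D1 D2 : ℝ)
variable (g1 : U1 → U2 → R1) (g2 : U1 → U2 → R2)
variable (J1 J2 M1 M2 : ℕ)

noncomputable def Ftil (θ : Om U1 U2 J1 J2 M1 M2) : ℝ :=
  ∑ s1, ∑ s2, qS.p (s1, s2) *
    ∑ j1, ∑ j2, CoreF qS qU1 qU2 J1 J2 M1 M2 s1 s2 j1 j2 θ *
      ind (d1 s1 (g1 (θ.1 j1) (θ.2.1 j2)) ≤ D1 ∧ d2 s2 (g2 (θ.1 j1) (θ.2.1 j2)) ≤ D2)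

lemma ExpectCore_ge (hM1 : 1 ≤ M1) (hM2 : 1 ≤ M2) (hJ1 : 1 ≤ J1) (hJ2 : 1 ≤ J2)
    (s1 : S1) (s2 : S2) (j1 : Fin J1) (j2 : Fin J2) :
    ∑ u1, ∑ u2, ind (d1 s1 (g1 u1 u2) ≤ D1 ∧ d2 s2 (g2 u1 u2) ≤ D2) *
      (mU1m qS qU1 u1 * mU2m qS qU2 u2 *
        (ra qS qU1 s1 u1 * rb qS qU2 s2 u2 * rc qS qU1 qU2 u1 u2) *
        ((ra qS qU1 s1 u1 + J1) * (rb qS qU2 s2 u2 + J2) *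
          (rc qS qU1 qU2 u1 u2 + Kc J1 J2 M1 M2))⁻¹)
    ≤ Expect qS qU1 qU2 J1 J2 M1 M2 (fun θ =>
        CoreF qS qU1 qU2 J1 J2 M1 M2 s1 s2 j1 j2 θ *
          ind (d1 s1 (g1 (θ.1 j1) (θ.2.1 j2)) ≤ D1 ∧
            d2 s2 (g2 (θ.1 j1) (θ.2.1 j2)) ≤ D2)) := by
  have hpt : ∀ θ : Om U1 U2 J1 J2 M1 M2,
      CoreF qS qU1 qU2 J1 J2 M1 M2 s1 s2 j1 j2 θ *
        ind (d1 s1 (g1 (θ.1 j1) (θ.2.1 j2)) ≤ D1 ∧ d2 s2 (g2 (θ.1 j1) (θ.2.1 j2)) ≤ D2)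
      = ∑ u1, ∑ u2, ind (d1 s1 (g1 u1 u2) ≤ D1 ∧ d2 s2 (g2 u1 u2) ≤ D2) *
          (ind (θ.1 j1 = u1) * ind (θ.2.1 j2 = u2) *
            CoreF qS qU1 qU2 J1 J2 M1 M2 s1 s2 j1 j2 θ) := by
    intro θ
    have h2 : ∀ u1 : U1, ∑ u2, ind (θ.2.1 j2 = u2) *
        (ind (d1 s1 (g1 u1 u2) ≤ D1 ∧ d2 s2 (g2 u1 u2) ≤ D2) *
          CoreF qS qU1 qU2 J1 J2 M1 M2 s1 s2 j1 j2 θ)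
        = ind (d1 s1 (g1 u1 (θ.2.1 j2)) ≤ D1 ∧ d2 s2 (g2 u1 (θ.2.1 j2)) ≤ D2) *
          CoreF qS qU1 qU2 J1 J2 M1 M2 s1 s2 j1 j2 θ := fun u1 =>
      sum_ind_mul (θ.2.1 j2) (fun u2 =>
        ind (d1 s1 (g1 u1 u2) ≤ D1 ∧ d2 s2 (g2 u1 u2) ≤ D2) *
          CoreF qS qU1 qU2 J1 J2 M1 M2 s1 s2 j1 j2 θ)
    have h1 := sum_ind_mul (θ.1 j1) (fun u1 =>
      ind (d1 s1 (g1 u1 (θ.2.1 j2)) ≤ D1 ∧ d2 s2 (g2 u1 (θ.2.1 j2)) ≤ D2) *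
        CoreF qS qU1 qU2 J1 J2 M1 M2 s1 s2 j1 j2 θ)
    calc CoreF qS qU1 qU2 J1 J2 M1 M2 s1 s2 j1 j2 θ *
          ind (d1 s1 (g1 (θ.1 j1) (θ.2.1 j2)) ≤ D1 ∧ d2 s2 (g2 (θ.1 j1) (θ.2.1 j2)) ≤ D2)
        = ∑ u1, ind (θ.1 j1 = u1) *
            (ind (d1 s1 (g1 u1 (θ.2.1 j2)) ≤ D1 ∧ d2 s2 (g2 u1 (θ.2.1 j2)) ≤ D2) *
              CoreF qS qU1 qU2 J1 J2 M1 M2 s1 s2 j1 j2 θ) := by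
          rw [h1]
          ring
      _ = ∑ u1, ind (θ.1 j1 = u1) * (∑ u2, ind (θ.2.1 j2 = u2) *
            (ind (d1 s1 (g1 u1 u2) ≤ D1 ∧ d2 s2 (g2 u1 u2) ≤ D2) *
              CoreF qS qU1 qU2 J1 J2 M1 M2 s1 s2 j1 j2 θ)) :=
          Finset.sum_congr rfl fun u1 _ => by rw [h2 u1]
      _ = ∑ u1, ∑ u2, ind (d1 s1 (g1 u1 u2) ≤ D1 ∧ d2 s2 (g2 u1 u2) ≤ D2) *
            (ind (θ.1 j1 = u1) * ind (θ.2.1 j2 = u2) *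
              CoreF qS qU1 qU2 J1 J2 M1 M2 s1 s2 j1 j2 θ) := by
          refine Finset.sum_congr rfl fun u1 _ => ?_
          rw [Finset.mul_sum]
          exact Finset.sum_congr rfl fun u2 _ => by ring
  rw [Expect_congr qS qU1 qU2 J1 J2 M1 M2 hpt]
  rw [Expect_sum qS qU1 qU2 J1 J2 M1 M2 (fun u1 θ =>
    ∑ u2, ind (d1 s1 (g1 u1 u2) ≤ D1 ∧ d2 s2 (g2 u1 u2) ≤ D2) *
      (ind (θ.1 j1 = u1) * ind (θ.2.1 j2 = u2) *
        CoreF qS qU1 qU2 J1 J2 M1 M2 s1 s2 j1 j2 θ))]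
  refine Finset.sum_le_sum fun u1 _ => ?_
  rw [Expect_sum qS qU1 qU2 J1 J2 M1 M2 (fun u2 θ =>
    ind (d1 s1 (g1 u1 u2) ≤ D1 ∧ d2 s2 (g2 u1 u2) ≤ D2) *
      (ind (θ.1 j1 = u1) * ind (θ.2.1 j2 = u2) *
        CoreF qS qU1 qU2 J1 J2 M1 M2 s1 s2 j1 j2 θ))]
  refine Finset.sum_le_sum fun u2 _ => ?_
  rw [Expect_const_mul]
  apply mul_le_mul_of_nonneg_left _ (ind_nonneg _)
  exact coreBound qS qU1 qU2 J1 J2 M1 M2 hM1 hM2 hJ1 hJ2 s1 s2 u1 u2 j1 j2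

end ftil
end BTaux
namespace BTaux
open Finset

section perterm
variable (qS : FinPMF (S1 × S2)) (qU1 : S1 → FinPMF U1) (qU2 : S2 → FinPMF U2)
variable (d1 : S1 → R1 → ℝ) (d2 : S2 → R2 → ℝ) (D1 D2 : ℝ)
variable (g1 : U1 → U2 → R1) (g2 : U1 → U2 → R2)
variable (J1 J2 M1 M2 : ℕ)

lemma perTerm (hM1 : 1 ≤ M1) (hM2 : 1 ≤ M2) (hJ1 : 1 ≤ J1) (hJ2 : 1 ≤ J2)
    (s1 : S1) (s2 : S2) (u1 : U1) (u2 : U2) :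
    qBT qS qU1 qU2 s1 s2 u1 u2 *
      ind (d1 s1 (g1 u1 u2) ≤ D1 ∧ d2 s2 (g2 u1 u2) ≤ D2) *
      ((1 + (J1 : ℝ)⁻¹ * (2 : ℝ) ^ (iS1U1 qS qU1 s1 u1)) *
       (1 + (J2 : ℝ)⁻¹ * (2 : ℝ) ^ (iS2U2 qS qU2 s2 u2)) *
       (1 + ((J2 : ℝ) * (M2 : ℝ)⁻¹ + (J1 : ℝ) * (M1 : ℝ)⁻¹ +
             (J1 : ℝ) * (J2 : ℝ) * ((M1 : ℝ) * (M2 : ℝ))⁻¹) *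
            (2 : ℝ) ^ (-(iU1U2 qS qU1 qU2 u1 u2))))⁻¹
    ≤ (J1 : ℝ) * (J2 : ℝ) *
        (qS.p (s1, s2) *
          (ind (d1 s1 (g1 u1 u2) ≤ D1 ∧ d2 s2 (g2 u1 u2) ≤ D2) *
            (mU1m qS qU1 u1 * mU2m qS qU2 u2 *
              (ra qS qU1 s1 u1 * rb qS qU2 s2 u2 * rc qS qU1 qU2 u1 u2) *
              ((ra qS qU1 s1 u1 + J1) * (rb qS qU2 s2 u2 + J2) *
                (rc qS qU1 qU2 u1 u2 + Kc J1 J2 M1 M2))⁻¹))) := by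
  have hJ1R : (0:ℝ) < (J1:ℝ) := by exact_mod_cast Nat.lt_of_lt_of_le Nat.zero_lt_one hJ1
  have hJ2R : (0:ℝ) < (J2:ℝ) := by exact_mod_cast Nat.lt_of_lt_of_le Nat.zero_lt_one hJ2
  have hKc := Kc_pos J1 J2 M1 M2 hM1 hM2 hJ1 hJ2
  rcases eq_or_lt_of_le (qBT_nonneg qS qU1 qU2 s1 s2 u1 u2) with hq | hq
  · rw [← hq, zero_mul, zero_mul]
    have h1 := ra_nonneg qS qU1 s1 u1
    have h2 := rb_nonneg qS qU2 s2 u2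
    have h3 := rc_nonneg qS qU1 qU2 u1 u2
    have h4 := mU1m_nonneg qS qU1 u1
    have h5 := mU2m_nonneg qS qU2 u2
    have h6 := ind_nonneg (d1 s1 (g1 u1 u2) ≤ D1 ∧ d2 s2 (g2 u1 u2) ≤ D2)
    have h0 := qS.nonneg (s1, s2)
    refine mul_nonneg (mul_nonneg hJ1R.le hJ2R.le) (mul_nonneg h0 (mul_nonneg h6
      (mul_nonneg (mul_nonneg (mul_nonneg h4 h5) (mul_nonneg (mul_nonneg h1 h2) h3))
        (inv_nonneg.mpr (mul_nonneg (mul_nonneg (add_nonneg h1 hJ1R.le)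
          (add_nonneg h2 hJ2R.le)) (add_nonneg h3 hKc.le))))))
  -- positive case
  have hqS : 0 < qS.p (s1, s2) := by
    rcases eq_or_lt_of_le (qS.nonneg (s1, s2)) with h | h
    · exfalso
      have : qBT qS qU1 qU2 s1 s2 u1 u2 = 0 := by
        unfold qBT
        rw [← h, zero_mul, zero_mul]
      linarith
    · exact h
  have hqU1 : 0 < (qU1 s1).p u1 := by
    rcases eq_or_lt_of_le ((qU1 s1).nonneg u1) with h | h
    · exfalso
      have : qBT qS qU1 qU2 s1 s2 u1 u2 = 0 := by
        unfold qBT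
        rw [← h, mul_zero, zero_mul]
      linarith
    · exact h
  have hqU2 : 0 < (qU2 s2).p u2 := by
    rcases eq_or_lt_of_le ((qU2 s2).nonneg u2) with h | h
    · exfalso
      have : qBT qS qU1 qU2 s1 s2 u1 u2 = 0 := by
        unfold qBT
        rw [← h, mul_zero]
      linarith
    · exact h
  have hmS1 : 0 < mS1 qS s1 := lt_of_lt_of_le hqS (q_le_mS1 qS s1 s2)
  have hmS2 : 0 < mS2 qS s2 := lt_of_lt_of_le hqS (q_le_mS2 qS s1 s2)
  have hm1 : 0 < mU1m qS qU1 u1 :=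
    lt_of_lt_of_le (mul_pos hmS1 hqU1) (mSq_le_mU1m qS qU1 s1 u1)
  have hm2 : 0 < mU2m qS qU2 u2 :=
    lt_of_lt_of_le (mul_pos hmS2 hqU2) (mSq_le_mU2m qS qU2 s2 u2)
  have hm12 : 0 < mU1U2 qS qU1 qU2 u1 u2 :=
    lt_of_lt_of_le hq (qBT_le_mU1U2 qS qU1 qU2 s1 s2 u1 u2)
  have ha : 0 < ra qS qU1 s1 u1 := div_pos hqU1 hm1
  have hb : 0 < rb qS qU2 s2 u2 := div_pos hqU2 hm2
  have hr : 0 < rc qS qU1 qU2 u1 u2 := div_pos hm12 (mul_pos hm1 hm2)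
  -- identify the powers
  have h2a : (2 : ℝ) ^ (iS1U1 qS qU1 s1 u1) = ra qS qU1 s1 u1 := by
    unfold iS1U1
    rw [mul_div_mul_left _ _ (ne_of_gt hmS1)]
    exact Real.rpow_logb (by norm_num) (by norm_num) ha
  have h2b : (2 : ℝ) ^ (iS2U2 qS qU2 s2 u2) = rb qS qU2 s2 u2 := by
    unfold iS2U2
    rw [mul_div_mul_left _ _ (ne_of_gt hmS2)]
    exact Real.rpow_logb (by norm_num) (by norm_num) hb
  have h2c : (2 : ℝ) ^ (-(iU1U2 qS qU1 qU2 u1 u2)) = (rc qS qU1 qU2 u1 u2)⁻¹ := by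
    unfold iU1U2
    rw [Real.rpow_neg (by norm_num)]
    congr 1
    exact Real.rpow_logb (by norm_num) (by norm_num) hr
  rw [h2a, h2b, h2c]
  have hqU1e : (qU1 s1).p u1 = ra qS qU1 s1 u1 * mU1m qS qU1 u1 :=
    (div_mul_cancel₀ _ (ne_of_gt hm1)).symm
  have hqU2e : (qU2 s2).p u2 = rb qS qU2 s2 u2 * mU2m qS qU2 u2 :=
    (div_mul_cancel₀ _ (ne_of_gt hm2)).symm
  have hKcq : ((J2 : ℝ) * (M2 : ℝ)⁻¹ + (J1 : ℝ) * (M1 : ℝ)⁻¹ +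
      (J1 : ℝ) * (J2 : ℝ) * ((M1 : ℝ) * (M2 : ℝ))⁻¹) = Kc J1 J2 M1 M2 := rfl
  unfold qBT
  rw [hqU1e, hqU2e, hKcq]
  apply le_of_eq
  have hpne : (ra qS qU1 s1 u1 + (J1:ℝ)) ≠ 0 := by positivity
  have hqne : (rb qS qU2 s2 u2 + (J2:ℝ)) ≠ 0 := by positivity
  have hwne : (rc qS qU1 qU2 u1 u2 + Kc J1 J2 M1 M2) ≠ 0 := by positivity
  have hX1 : (1 + (J1 : ℝ)⁻¹ * ra qS qU1 s1 u1) = (ra qS qU1 s1 u1 + J1) / J1 := by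
    field_simp
    ring
  have hX2 : (1 + (J2 : ℝ)⁻¹ * rb qS qU2 s2 u2) = (rb qS qU2 s2 u2 + J2) / J2 := by
    field_simp
    ring
  have hX3 : (1 + Kc J1 J2 M1 M2 * (rc qS qU1 qU2 u1 u2)⁻¹)
      = (rc qS qU1 qU2 u1 u2 + Kc J1 J2 M1 M2) / rc qS qU1 qU2 u1 u2 := by
    field_simp
  rw [hX1, hX2, hX3]
  rw [div_mul_div_comm, div_mul_div_comm]
  rw [inv_div]
  field_simp
end perterm
end BTaux
namespace BTaux
open Finset

section glue
variable (qS : FinPMF (S1 × S2)) (qU1 : S1 → FinPMF U1) (qU2 : S2 → FinPMF U2)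
variable (d1 : S1 → R1 → ℝ) (d2 : S2 → R2 → ℝ) (D1 D2 : ℝ)
variable (g1 : U1 → U2 → R1) (g2 : U1 → U2 → R2)
variable (J1 J2 M1 M2 : ℕ)

lemma RHS_le_ExpectFtil (hM1 : 1 ≤ M1) (hM2 : 1 ≤ M2) (hJ1 : 1 ≤ J1) (hJ2 : 1 ≤ J2) :
    (∑ s1 : S1, ∑ s2 : S2, ∑ u1 : U1, ∑ u2 : U2,
      qBT qS qU1 qU2 s1 s2 u1 u2 *
      ind (d1 s1 (g1 u1 u2) ≤ D1 ∧ d2 s2 (g2 u1 u2) ≤ D2) *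
      ((1 + (J1 : ℝ)⁻¹ * (2 : ℝ) ^ (iS1U1 qS qU1 s1 u1)) *
       (1 + (J2 : ℝ)⁻¹ * (2 : ℝ) ^ (iS2U2 qS qU2 s2 u2)) *
       (1 + ((J2 : ℝ) * (M2 : ℝ)⁻¹ + (J1 : ℝ) * (M1 : ℝ)⁻¹ +
             (J1 : ℝ) * (J2 : ℝ) * ((M1 : ℝ) * (M2 : ℝ))⁻¹) *
            (2 : ℝ) ^ (-(iU1U2 qS qU1 qU2 u1 u2))))⁻¹)
    ≤ Expect qS qU1 qU2 J1 J2 M1 M2 (Ftil qS qU1 qU2 d1 d2 D1 D2 g1 g2 J1 J2 M1 M2) := by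
  have hA : Expect qS qU1 qU2 J1 J2 M1 M2 (Ftil qS qU1 qU2 d1 d2 D1 D2 g1 g2 J1 J2 M1 M2)
      = ∑ s1, ∑ s2, qS.p (s1, s2) * ∑ j1, ∑ j2, Expect qS qU1 qU2 J1 J2 M1 M2
          (fun θ => CoreF qS qU1 qU2 J1 J2 M1 M2 s1 s2 j1 j2 θ *
            ind (d1 s1 (g1 (θ.1 j1) (θ.2.1 j2)) ≤ D1 ∧
              d2 s2 (g2 (θ.1 j1) (θ.2.1 j2)) ≤ D2)) := by
    unfold Ftil
    rw [Expect_sum qS qU1 qU2 J1 J2 M1 M2 (fun s1 θ => ∑ s2, qS.p (s1, s2) *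
      ∑ j1, ∑ j2, CoreF qS qU1 qU2 J1 J2 M1 M2 s1 s2 j1 j2 θ *
        ind (d1 s1 (g1 (θ.1 j1) (θ.2.1 j2)) ≤ D1 ∧ d2 s2 (g2 (θ.1 j1) (θ.2.1 j2)) ≤ D2))]
    refine Finset.sum_congr rfl fun s1 _ => ?_
    rw [Expect_sum qS qU1 qU2 J1 J2 M1 M2 (fun s2 θ => qS.p (s1, s2) *
      ∑ j1, ∑ j2, CoreF qS qU1 qU2 J1 J2 M1 M2 s1 s2 j1 j2 θ *
        ind (d1 s1 (g1 (θ.1 j1) (θ.2.1 j2)) ≤ D1 ∧ d2 s2 (g2 (θ.1 j1) (θ.2.1 j2)) ≤ D2))]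
    refine Finset.sum_congr rfl fun s2 _ => ?_
    rw [Expect_const_mul]
    congr 1
    rw [Expect_sum qS qU1 qU2 J1 J2 M1 M2 (fun j1 θ =>
      ∑ j2, CoreF qS qU1 qU2 J1 J2 M1 M2 s1 s2 j1 j2 θ *
        ind (d1 s1 (g1 (θ.1 j1) (θ.2.1 j2)) ≤ D1 ∧ d2 s2 (g2 (θ.1 j1) (θ.2.1 j2)) ≤ D2))]
    refine Finset.sum_congr rfl fun j1 _ => ?_
    rw [Expect_sum qS qU1 qU2 J1 J2 M1 M2 (fun j2 θ =>
      CoreF qS qU1 qU2 J1 J2 M1 M2 s1 s2 j1 j2 θ *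
        ind (d1 s1 (g1 (θ.1 j1) (θ.2.1 j2)) ≤ D1 ∧ d2 s2 (g2 (θ.1 j1) (θ.2.1 j2)) ≤ D2))]
  rw [hA]
  refine Finset.sum_le_sum fun s1 _ => Finset.sum_le_sum fun s2 _ => ?_
  have hB : (J1:ℝ) * (J2:ℝ) * (∑ u1, ∑ u2,
      ind (d1 s1 (g1 u1 u2) ≤ D1 ∧ d2 s2 (g2 u1 u2) ≤ D2) *
        (mU1m qS qU1 u1 * mU2m qS qU2 u2 *
          (ra qS qU1 s1 u1 * rb qS qU2 s2 u2 * rc qS qU1 qU2 u1 u2) *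
          ((ra qS qU1 s1 u1 + J1) * (rb qS qU2 s2 u2 + J2) *
            (rc qS qU1 qU2 u1 u2 + Kc J1 J2 M1 M2))⁻¹))
      ≤ ∑ j1, ∑ j2, Expect qS qU1 qU2 J1 J2 M1 M2
          (fun θ => CoreF qS qU1 qU2 J1 J2 M1 M2 s1 s2 j1 j2 θ *
            ind (d1 s1 (g1 (θ.1 j1) (θ.2.1 j2)) ≤ D1 ∧
              d2 s2 (g2 (θ.1 j1) (θ.2.1 j2)) ≤ D2)) := by
    have hcount : ∑ j1 : Fin J1, ∑ j2 : Fin J2, (∑ u1, ∑ u2,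
        ind (d1 s1 (g1 u1 u2) ≤ D1 ∧ d2 s2 (g2 u1 u2) ≤ D2) *
          (mU1m qS qU1 u1 * mU2m qS qU2 u2 *
            (ra qS qU1 s1 u1 * rb qS qU2 s2 u2 * rc qS qU1 qU2 u1 u2) *
            ((ra qS qU1 s1 u1 + J1) * (rb qS qU2 s2 u2 + J2) *
              (rc qS qU1 qU2 u1 u2 + Kc J1 J2 M1 M2))⁻¹))
        = (J1:ℝ) * (J2:ℝ) * (∑ u1, ∑ u2,
          ind (d1 s1 (g1 u1 u2) ≤ D1 ∧ d2 s2 (g2 u1 u2) ≤ D2) *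
            (mU1m qS qU1 u1 * mU2m qS qU2 u2 *
              (ra qS qU1 s1 u1 * rb qS qU2 s2 u2 * rc qS qU1 qU2 u1 u2) *
              ((ra qS qU1 s1 u1 + J1) * (rb qS qU2 s2 u2 + J2) *
                (rc qS qU1 qU2 u1 u2 + Kc J1 J2 M1 M2))⁻¹)) := by
      rw [Finset.sum_const, Finset.sum_const, Finset.card_univ, Finset.card_univ,
        Fintype.card_fin, Fintype.card_fin, nsmul_eq_mul, nsmul_eq_mul]
      ring
    rw [← hcount]
    refine Finset.sum_le_sum fun j1 _ => Finset.sum_le_sum fun j2 _ => ?_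
    exact ExpectCore_ge qS qU1 qU2 d1 d2 D1 D2 g1 g2 J1 J2 M1 M2 hM1 hM2 hJ1 hJ2 s1 s2 j1 j2
  calc ∑ u1, ∑ u2, qBT qS qU1 qU2 s1 s2 u1 u2 *
        ind (d1 s1 (g1 u1 u2) ≤ D1 ∧ d2 s2 (g2 u1 u2) ≤ D2) *
        ((1 + (J1 : ℝ)⁻¹ * (2 : ℝ) ^ (iS1U1 qS qU1 s1 u1)) *
         (1 + (J2 : ℝ)⁻¹ * (2 : ℝ) ^ (iS2U2 qS qU2 s2 u2)) *
         (1 + ((J2 : ℝ) * (M2 : ℝ)⁻¹ + (J1 : ℝ) * (M1 : ℝ)⁻¹ +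
               (J1 : ℝ) * (J2 : ℝ) * ((M1 : ℝ) * (M2 : ℝ))⁻¹) *
              (2 : ℝ) ^ (-(iU1U2 qS qU1 qU2 u1 u2))))⁻¹
      ≤ ∑ u1, ∑ u2, (J1 : ℝ) * (J2 : ℝ) *
          (qS.p (s1, s2) *
            (ind (d1 s1 (g1 u1 u2) ≤ D1 ∧ d2 s2 (g2 u1 u2) ≤ D2) *
              (mU1m qS qU1 u1 * mU2m qS qU2 u2 *
                (ra qS qU1 s1 u1 * rb qS qU2 s2 u2 * rc qS qU1 qU2 u1 u2) *
                ((ra qS qU1 s1 u1 + J1) * (rb qS qU2 s2 u2 + J2) *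
                  (rc qS qU1 qU2 u1 u2 + Kc J1 J2 M1 M2))⁻¹))) := by
        refine Finset.sum_le_sum fun u1 _ => Finset.sum_le_sum fun u2 _ => ?_
        exact perTerm qS qU1 qU2 d1 d2 D1 D2 g1 g2 J1 J2 M1 M2 hM1 hM2 hJ1 hJ2 s1 s2 u1 u2
    _ = qS.p (s1, s2) * ((J1:ℝ) * (J2:ℝ) * (∑ u1, ∑ u2,
          ind (d1 s1 (g1 u1 u2) ≤ D1 ∧ d2 s2 (g2 u1 u2) ≤ D2) *
            (mU1m qS qU1 u1 * mU2m qS qU2 u2 *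
              (ra qS qU1 s1 u1 * rb qS qU2 s2 u2 * rc qS qU1 qU2 u1 u2) *
              ((ra qS qU1 s1 u1 + J1) * (rb qS qU2 s2 u2 + J2) *
                (rc qS qU1 qU2 u1 u2 + Kc J1 J2 M1 M2))⁻¹))) := by
        simp_rw [← Finset.mul_sum]
        ring
    _ ≤ qS.p (s1, s2) * ∑ j1, ∑ j2, Expect qS qU1 qU2 J1 J2 M1 M2
          (fun θ => CoreF qS qU1 qU2 J1 J2 M1 M2 s1 s2 j1 j2 θ *
            ind (d1 s1 (g1 (θ.1 j1) (θ.2.1 j2)) ≤ D1 ∧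
              d2 s2 (g2 (θ.1 j1) (θ.2.1 j2)) ≤ D2)) :=
        mul_le_mul_of_nonneg_left hB (qS.nonneg (s1, s2))

end glue
end BTaux
namespace BTaux
open Finset

section codeconstruct
variable (qS : FinPMF (S1 × S2)) (qU1 : S1 → FinPMF U1) (qU2 : S2 → FinPMF U2)
variable (g1 : U1 → U2 → R1) (g2 : U1 → U2 → R2)
variable (J1 J2 M1 M2 : ℕ)

noncomputable def eHat1 (θ : Om U1 U2 J1 J2 M1 M2) (s1 : S1) (j : Fin J1) : ℝ :=
  if 0 < Z1 qS qU1 J1 s1 θ.1 then ra qS qU1 s1 (θ.1 j) / Z1 qS qU1 J1 s1 θ.1 else (J1:ℝ)⁻¹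

noncomputable def eHat2 (θ : Om U1 U2 J1 J2 M1 M2) (s2 : S2) (j : Fin J2) : ℝ :=
  if 0 < Z2 qS qU2 J2 s2 θ.2.1 then rb qS qU2 s2 (θ.2.1 j) / Z2 qS qU2 J2 s2 θ.2.1 else (J2:ℝ)⁻¹

noncomputable def dHat (θ : Om U1 U2 J1 J2 M1 M2) (n : Fin M1 × Fin M2)
    (j1 : Fin J1) (j2 : Fin J2) : ℝ :=
  if 0 < WB qS qU1 qU2 J1 J2 M1 M2 θ n.1 n.2 then
    ind (θ.2.2.1 j1 = n.1) * ind (θ.2.2.2 j2 = n.2) *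
      rc qS qU1 qU2 (θ.1 j1) (θ.2.1 j2) / WB qS qU1 qU2 J1 J2 M1 M2 θ n.1 n.2
  else (J1:ℝ)⁻¹ * (J2:ℝ)⁻¹

lemma eHat1_nonneg (θ : Om U1 U2 J1 J2 M1 M2) (s1 : S1) (j : Fin J1) : 0 ≤ eHat1 qS qU1 J1 J2 M1 M2 θ s1 j := by
  unfold eHat1
  split
  · exact div_nonneg (ra_nonneg qS qU1 s1 _) (Z1_nonneg qS qU1 J1 s1 θ.1)
  · positivity

lemma eHat2_nonneg (θ : Om U1 U2 J1 J2 M1 M2) (s2 : S2) (j : Fin J2) : 0 ≤ eHat2 qS qU2 J1 J2 M1 M2 θ s2 j := by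
  unfold eHat2
  split
  · exact div_nonneg (rb_nonneg qS qU2 s2 _) (Z2_nonneg qS qU2 J2 s2 θ.2.1)
  · positivity

lemma dHat_nonneg (θ : Om U1 U2 J1 J2 M1 M2) (n : Fin M1 × Fin M2) (j1 : Fin J1) (j2 : Fin J2) : 0 ≤ dHat qS qU1 qU2 J1 J2 M1 M2 θ n j1 j2 := by
  unfold dHat
  split
  · apply div_nonneg _ (WB_nonneg qS qU1 qU2 J1 J2 M1 M2 θ n.1 n.2)
    exact mul_nonneg (mul_nonneg (ind_nonneg _) (ind_nonneg _)) (rc_nonneg qS qU1 qU2 _ _)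
  · positivity

lemma e1_le_eHat1 (θ : Om U1 U2 J1 J2 M1 M2) (s1 : S1) (j : Fin J1) : ra qS qU1 s1 (θ.1 j) / Z1 qS qU1 J1 s1 θ.1
    ≤ eHat1 qS qU1 J1 J2 M1 M2 θ s1 j := by
  unfold eHat1
  split
  · exact le_refl _
  · rename_i h
    have hZ : Z1 qS qU1 J1 s1 θ.1 = 0 :=
      le_antisymm (not_lt.mp h) (Z1_nonneg qS qU1 J1 s1 θ.1)
    rw [hZ, div_zero]
    positivity

lemma e2_le_eHat2 (θ : Om U1 U2 J1 J2 M1 M2) (s2 : S2) (j : Fin J2) : rb qS qU2 s2 (θ.2.1 j) / Z2 qS qU2 J2 s2 θ.2.1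
    ≤ eHat2 qS qU2 J1 J2 M1 M2 θ s2 j := by
  unfold eHat2
  split
  · exact le_refl _
  · rename_i h
    have hZ : Z2 qS qU2 J2 s2 θ.2.1 = 0 :=
      le_antisymm (not_lt.mp h) (Z2_nonneg qS qU2 J2 s2 θ.2.1)
    rw [hZ, div_zero]
    positivity

lemma d_le_dHat (θ : Om U1 U2 J1 J2 M1 M2) (j1 : Fin J1) (j2 : Fin J2) : rc qS qU1 qU2 (θ.1 j1) (θ.2.1 j2) / Wt qS qU1 qU2 J1 J2 M1 M2 θ j1 j2
    ≤ dHat qS qU1 qU2 J1 J2 M1 M2 θ (θ.2.2.1 j1, θ.2.2.2 j2) j1 j2 := by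
  unfold dHat
  split
  · rename_i h
    unfold Wt
    rw [ind_rfl, ind_rfl, one_mul, one_mul]
  · rename_i h
    have hW : Wt qS qU1 qU2 J1 J2 M1 M2 θ j1 j2 = 0 :=
      le_antisymm (not_lt.mp h) (Wt_nonneg qS qU1 qU2 J1 J2 M1 M2 θ j1 j2)
    rw [hW, div_zero]
    positivity

lemma sum_eHat1 (hJ1 : 1 ≤ J1) (θ : Om U1 U2 J1 J2 M1 M2) (s1 : S1) : ∑ j, eHat1 qS qU1 J1 J2 M1 M2 θ s1 j = 1 := by
  unfold eHat1
  by_cases h : 0 < Z1 qS qU1 J1 s1 θ.1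
  · simp only [if_pos h]
    rw [← Finset.sum_div]
    exact div_self (ne_of_gt h)
  · simp only [if_neg h]
    rw [Finset.sum_const, Finset.card_univ, Fintype.card_fin, nsmul_eq_mul]
    have : (J1:ℝ) ≠ 0 := Nat.cast_ne_zero.mpr (by omega)
    field_simp

lemma sum_eHat2 (hJ2 : 1 ≤ J2) (θ : Om U1 U2 J1 J2 M1 M2) (s2 : S2) : ∑ j, eHat2 qS qU2 J1 J2 M1 M2 θ s2 j = 1 := by
  unfold eHat2
  by_cases h : 0 < Z2 qS qU2 J2 s2 θ.2.1
  · simp only [if_pos h]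
    rw [← Finset.sum_div]
    exact div_self (ne_of_gt h)
  · simp only [if_neg h]
    rw [Finset.sum_const, Finset.card_univ, Fintype.card_fin, nsmul_eq_mul]
    have : (J2:ℝ) ≠ 0 := Nat.cast_ne_zero.mpr (by omega)
    field_simp

lemma sum_dHat (hJ1 : 1 ≤ J1) (hJ2 : 1 ≤ J2) (θ : Om U1 U2 J1 J2 M1 M2) (n : Fin M1 × Fin M2) :
    ∑ j1, ∑ j2, dHat qS qU1 qU2 J1 J2 M1 M2 θ n j1 j2 = 1 := by
  unfold dHat
  by_cases h : 0 < WB qS qU1 qU2 J1 J2 M1 M2 θ n.1 n.2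
  · simp only [if_pos h]
    have : ∀ j1 : Fin J1, ∑ j2, ind (θ.2.2.1 j1 = n.1) * ind (θ.2.2.2 j2 = n.2) *
        rc qS qU1 qU2 (θ.1 j1) (θ.2.1 j2) / WB qS qU1 qU2 J1 J2 M1 M2 θ n.1 n.2
        = (∑ j2, ind (θ.2.2.1 j1 = n.1) * ind (θ.2.2.2 j2 = n.2) *
            rc qS qU1 qU2 (θ.1 j1) (θ.2.1 j2)) / WB qS qU1 qU2 J1 J2 M1 M2 θ n.1 n.2 :=
      fun j1 => (Finset.sum_div _ _ _).symm
    rw [Finset.sum_congr rfl fun j1 _ => this j1, ← Finset.sum_div]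
    unfold WB
    exact div_self (ne_of_gt h)
  · simp only [if_neg h]
    rw [Finset.sum_const, Finset.sum_const, Finset.card_univ, Finset.card_univ,
      Fintype.card_fin, Fintype.card_fin, nsmul_eq_mul, nsmul_eq_mul]
    have h1 : (J1:ℝ) ≠ 0 := Nat.cast_ne_zero.mpr (by omega)
    have h2 : (J2:ℝ) ≠ 0 := Nat.cast_ne_zero.mpr (by omega)
    field_simp

noncomputable def encC1 (hJ1 : 1 ≤ J1) (θ : Om U1 U2 J1 J2 M1 M2) (s1 : S1) :
    FinPMF (Fin M1) where
  p := fun m => ∑ j, ind (θ.2.2.1 j = m) * eHat1 qS qU1 J1 J2 M1 M2 θ s1 j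
  nonneg := fun m => Finset.sum_nonneg fun j _ =>
    mul_nonneg (ind_nonneg _) (eHat1_nonneg qS qU1 J1 J2 M1 M2 θ s1 j)
  sum_eq_one := by
    rw [Finset.sum_comm]
    have : ∀ j : Fin J1, ∑ m : Fin M1, ind (θ.2.2.1 j = m) * eHat1 qS qU1 J1 J2 M1 M2 θ s1 j
        = eHat1 qS qU1 J1 J2 M1 M2 θ s1 j := fun j =>
      sum_ind_mul (θ.2.2.1 j) (fun _ => eHat1 qS qU1 J1 J2 M1 M2 θ s1 j)
    rw [Finset.sum_congr rfl fun j _ => this j]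
    exact sum_eHat1 qS qU1 J1 J2 M1 M2 hJ1 θ s1

noncomputable def encC2 (hJ2 : 1 ≤ J2) (θ : Om U1 U2 J1 J2 M1 M2) (s2 : S2) :
    FinPMF (Fin M2) where
  p := fun m => ∑ j, ind (θ.2.2.2 j = m) * eHat2 qS qU2 J1 J2 M1 M2 θ s2 j
  nonneg := fun m => Finset.sum_nonneg fun j _ =>
    mul_nonneg (ind_nonneg _) (eHat2_nonneg qS qU2 J1 J2 M1 M2 θ s2 j)
  sum_eq_one := by
    rw [Finset.sum_comm]
    have : ∀ j : Fin J2, ∑ m : Fin M2, ind (θ.2.2.2 j = m) * eHat2 qS qU2 J1 J2 M1 M2 θ s2 j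
        = eHat2 qS qU2 J1 J2 M1 M2 θ s2 j := fun j =>
      sum_ind_mul (θ.2.2.2 j) (fun _ => eHat2 qS qU2 J1 J2 M1 M2 θ s2 j)
    rw [Finset.sum_congr rfl fun j _ => this j]
    exact sum_eHat2 qS qU2 J1 J2 M1 M2 hJ2 θ s2

noncomputable def decC (hJ1 : 1 ≤ J1) (hJ2 : 1 ≤ J2) (θ : Om U1 U2 J1 J2 M1 M2)
    (n : Fin M1 × Fin M2) : FinPMF (R1 × R2) where
  p := fun rv => ∑ j1, ∑ j2, dHat qS qU1 qU2 J1 J2 M1 M2 θ n j1 j2 *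
    (ind (g1 (θ.1 j1) (θ.2.1 j2) = rv.1) * ind (g2 (θ.1 j1) (θ.2.1 j2) = rv.2))
  nonneg := fun rv => Finset.sum_nonneg fun j1 _ => Finset.sum_nonneg fun j2 _ =>
    mul_nonneg (dHat_nonneg qS qU1 qU2 J1 J2 M1 M2 θ n j1 j2)
      (mul_nonneg (ind_nonneg _) (ind_nonneg _))
  sum_eq_one := by
    rw [Finset.sum_comm]
    have hst : ∀ j1 : Fin J1, ∑ rv : R1 × R2, ∑ j2,
        dHat qS qU1 qU2 J1 J2 M1 M2 θ n j1 j2 *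
          (ind (g1 (θ.1 j1) (θ.2.1 j2) = rv.1) * ind (g2 (θ.1 j1) (θ.2.1 j2) = rv.2))
        = ∑ j2, dHat qS qU1 qU2 J1 J2 M1 M2 θ n j1 j2 := by
      intro j1
      rw [Finset.sum_comm]
      refine Finset.sum_congr rfl fun j2 _ => ?_
      rw [← Finset.mul_sum]
      have : ∑ rv : R1 × R2, ind (g1 (θ.1 j1) (θ.2.1 j2) = rv.1) *
          ind (g2 (θ.1 j1) (θ.2.1 j2) = rv.2) = 1 := by
        rw [Fintype.sum_prod_type]
        have h2 : ∀ r1 : R1, ∑ r2 : R2, ind (g1 (θ.1 j1) (θ.2.1 j2) = r1) *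
            ind (g2 (θ.1 j1) (θ.2.1 j2) = r2)
            = ind (g1 (θ.1 j1) (θ.2.1 j2) = r1) := by
          intro r1
          rw [← Finset.mul_sum, sum_ind, mul_one]
        rw [Finset.sum_congr rfl fun r1 _ => h2 r1, sum_ind]
      rw [this, mul_one]
    rw [Finset.sum_congr rfl fun j1 _ => hst j1]
    exact sum_dHat qS qU1 qU2 J1 J2 M1 M2 hJ1 hJ2 θ n

end codeconstruct
end BTaux
namespace BTaux
open Finset

section codeinner
variable {J1 J2 M1 M2 : ℕ}

lemma collapse_mm (b1 : Fin J1 → Fin M1) (b2 : Fin J2 → Fin M2)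
    (X : Fin J1 → Fin J2 → Fin M1 → Fin M2 → ℝ) :
    ∑ m1, ∑ m2, ∑ j1, ∑ j2, ind (b1 j1 = m1) * (ind (b2 j2 = m2) * X j1 j2 m1 m2)
    = ∑ j1, ∑ j2, X j1 j2 (b1 j1) (b2 j2) := by
  have step1 : ∀ m1 : Fin M1,
      (∑ m2, ∑ j1, ∑ j2, ind (b1 j1 = m1) * (ind (b2 j2 = m2) * X j1 j2 m1 m2))
      = ∑ j1, ∑ j2, ind (b1 j1 = m1) * X j1 j2 m1 (b2 j2) := by
    intro m1
    rw [Finset.sum_comm]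
    refine Finset.sum_congr rfl fun j1 _ => ?_
    rw [Finset.sum_comm]
    refine Finset.sum_congr rfl fun j2 _ => ?_
    have h : ∀ m2, ind (b1 j1 = m1) * (ind (b2 j2 = m2) * X j1 j2 m1 m2)
        = ind (b2 j2 = m2) * (ind (b1 j1 = m1) * X j1 j2 m1 m2) := fun m2 => by ring
    rw [Finset.sum_congr rfl fun m2 _ => h m2]
    exact sum_ind_mul (b2 j2) (fun m2 => ind (b1 j1 = m1) * X j1 j2 m1 m2)
  rw [Finset.sum_congr rfl fun m1 _ => step1 m1]
  rw [Finset.sum_comm]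
  refine Finset.sum_congr rfl fun j1 _ => ?_
  rw [Finset.sum_comm]
  refine Finset.sum_congr rfl fun j2 _ => ?_
  exact sum_ind_mul (b1 j1) (fun m1 => X j1 j2 m1 (b2 j2))

lemma mul_chain {a a' b b' c c' i : ℝ} (haN : 0 ≤ a) (hbN : 0 ≤ b) (hcN : 0 ≤ c)
    (hiN : 0 ≤ i) (ha : a ≤ a') (hb : b ≤ b') (hc : c ≤ c') :
    a * b * (c * i) ≤ a' * (b' * (c' * i)) := by
  have ha'N : 0 ≤ a' := le_trans haN ha
  have hb'N : 0 ≤ b' := le_trans hbN hb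
  have h1 : a * b ≤ a' * b' := mul_le_mul ha hb hbN ha'N
  have h2 : c * i ≤ c' * i := mul_le_mul_of_nonneg_right hc hiN
  have h3 : a * b * (c * i) ≤ (a' * b') * (c' * i) :=
    mul_le_mul h1 h2 (mul_nonneg hcN hiN) (mul_nonneg ha'N hb'N)
  calc a * b * (c * i) ≤ (a' * b') * (c' * i) := h3
    _ = a' * (b' * (c' * i)) := by ring

lemma code_inner (b1 : Fin J1 → Fin M1) (b2 : Fin J2 → Fin M2)
    (a a' : Fin J1 → ℝ) (b b' : Fin J2 → ℝ)
    (D : Fin M1 × Fin M2 → Fin J1 → Fin J2 → ℝ) (Dlow : Fin J1 → Fin J2 → ℝ)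
    (I : Fin J1 → Fin J2 → ℝ)
    (haN : ∀ j, 0 ≤ a j) (ha : ∀ j, a j ≤ a' j)
    (hbN : ∀ j, 0 ≤ b j) (hb : ∀ j, b j ≤ b' j)
    (hDN : ∀ n j1 j2, 0 ≤ D n j1 j2) (hDlowN : ∀ j1 j2, 0 ≤ Dlow j1 j2)
    (hD : ∀ j1 j2, Dlow j1 j2 ≤ D (b1 j1, b2 j2) j1 j2)
    (hIN : ∀ j1 j2, 0 ≤ I j1 j2) :
    ∑ j1, ∑ j2, a j1 * b j2 * (Dlow j1 j2 * I j1 j2)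
    ≤ ∑ m1, ∑ m2, (∑ j1, ind (b1 j1 = m1) * a' j1) *
        ((∑ j2, ind (b2 j2 = m2) * b' j2) *
          (∑ j1', ∑ j2', D (m1, m2) j1' j2' * I j1' j2')) := by
  have ha'N : ∀ j, 0 ≤ a' j := fun j => le_trans (haN j) (ha j)
  have hb'N : ∀ j, 0 ≤ b' j := fun j => le_trans (hbN j) (hb j)
  have hRHS : ∑ m1, ∑ m2, (∑ j1, ind (b1 j1 = m1) * a' j1) *
        ((∑ j2, ind (b2 j2 = m2) * b' j2) *
          (∑ j1', ∑ j2', D (m1, m2) j1' j2' * I j1' j2'))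
      = ∑ j1, ∑ j2, a' j1 * (b' j2 *
          (∑ j1', ∑ j2', D (b1 j1, b2 j2) j1' j2' * I j1' j2')) := by
    have h1 : ∀ m1 m2, (∑ j1, ind (b1 j1 = m1) * a' j1) *
        ((∑ j2, ind (b2 j2 = m2) * b' j2) *
          (∑ j1', ∑ j2', D (m1, m2) j1' j2' * I j1' j2'))
        = ∑ j1, ∑ j2, ind (b1 j1 = m1) * (ind (b2 j2 = m2) *
            (a' j1 * (b' j2 * (∑ j1', ∑ j2', D (m1, m2) j1' j2' * I j1' j2')))) := by
      intro m1 m2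
      rw [Finset.sum_mul]
      refine Finset.sum_congr rfl fun j1 _ => ?_
      rw [Finset.sum_mul, Finset.mul_sum]
      refine Finset.sum_congr rfl fun j2 _ => ?_
      ring
    rw [Finset.sum_congr rfl fun m1 _ => Finset.sum_congr rfl fun m2 _ => h1 m1 m2]
    exact collapse_mm b1 b2 (fun j1 j2 m1 m2 =>
      a' j1 * (b' j2 * (∑ j1', ∑ j2', D (m1, m2) j1' j2' * I j1' j2')))
  rw [hRHS]
  refine Finset.sum_le_sum fun j1 _ => Finset.sum_le_sum fun j2 _ => ?_
  have hTge : D (b1 j1, b2 j2) j1 j2 * I j1 j2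
      ≤ ∑ j1', ∑ j2', D (b1 j1, b2 j2) j1' j2' * I j1' j2' := by
    have hnn : ∀ (j1' : Fin J1) (j2' : Fin J2),
        (0:ℝ) ≤ D (b1 j1, b2 j2) j1' j2' * I j1' j2' := fun j1' j2' =>
      mul_nonneg (hDN _ j1' j2') (hIN j1' j2')
    calc D (b1 j1, b2 j2) j1 j2 * I j1 j2
        ≤ ∑ j2', D (b1 j1, b2 j2) j1 j2' * I j1 j2' :=
          Finset.single_le_sum (fun j2' _ => hnn j1 j2') (mem_univ j2)
      _ ≤ ∑ j1', ∑ j2', D (b1 j1, b2 j2) j1' j2' * I j1' j2' :=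
          Finset.single_le_sum (fun j1' _ => Finset.sum_nonneg fun j2' _ => hnn j1' j2')
            (mem_univ j1)
  calc a j1 * b j2 * (Dlow j1 j2 * I j1 j2)
      ≤ a' j1 * (b' j2 * (D (b1 j1, b2 j2) j1 j2 * I j1 j2)) :=
        mul_chain (haN j1) (hbN j2) (hDlowN j1 j2) (hIN j1 j2) (ha j1) (hb j2) (hD j1 j2)
    _ ≤ a' j1 * (b' j2 * (∑ j1', ∑ j2', D (b1 j1, b2 j2) j1' j2' * I j1' j2')) := by
        apply mul_le_mul_of_nonneg_left _ (ha'N j1)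
        exact mul_le_mul_of_nonneg_left hTge (hb'N j2)

end codeinner
end BTaux
namespace BTaux
open Finset

section finalparts
variable (qS : FinPMF (S1 × S2)) (qU1 : S1 → FinPMF U1) (qU2 : S2 → FinPMF U2)
variable (d1 : S1 → R1 → ℝ) (d2 : S2 → R2 → ℝ) (D1 D2 : ℝ)
variable (g1 : U1 → U2 → R1) (g2 : U1 → U2 → R2)
variable (J1 J2 M1 M2 : ℕ)

lemma sum_swap_rj {A B C E : Type} [Fintype A] [Fintype B] [Fintype C] [Fintype E]
    (f : A → B → C → E → ℝ) :
    ∑ a, ∑ b, ∑ c, ∑ e, f a b c e = ∑ c, ∑ e, ∑ a, ∑ b, f a b c e := by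
  have h1 : ∀ a : A, ∑ b, ∑ c, ∑ e, f a b c e = ∑ c, ∑ e, ∑ b, f a b c e := by
    intro a
    rw [Finset.sum_comm]
    exact Finset.sum_congr rfl fun c _ => Finset.sum_comm
  rw [Finset.sum_congr rfl fun a _ => h1 a]
  rw [Finset.sum_comm]
  exact Finset.sum_congr rfl fun c _ => Finset.sum_comm

lemma Ftil_le_pNoExcess (hJ1 : 1 ≤ J1) (hJ2 : 1 ≤ J2) (θ : Om U1 U2 J1 J2 M1 M2) :
    Ftil qS qU1 qU2 d1 d2 D1 D2 g1 g2 J1 J2 M1 M2 θ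
    ≤ pNoExcessBT M1 M2 qS d1 d2 D1 D2 (encC1 qS qU1 J1 J2 M1 M2 hJ1 θ)
        (encC2 qS qU2 J1 J2 M1 M2 hJ2 θ) (decC qS qU1 qU2 g1 g2 J1 J2 M1 M2 hJ1 hJ2 θ) := by
  unfold pNoExcessBT Ftil
  refine Finset.sum_le_sum fun s1 _ => Finset.sum_le_sum fun s2 _ => ?_
  -- Step II : collapse the reconstruction sums
  have hT : ∀ (m1 : Fin M1) (m2 : Fin M2),
      (∑ r1 : R1, ∑ r2 : R2,
        (decC qS qU1 qU2 g1 g2 J1 J2 M1 M2 hJ1 hJ2 θ (m1, m2)).p (r1, r2) *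
          ind (d1 s1 r1 ≤ D1 ∧ d2 s2 r2 ≤ D2))
      = ∑ j1', ∑ j2', dHat qS qU1 qU2 J1 J2 M1 M2 θ (m1, m2) j1' j2' *
          ind (d1 s1 (g1 (θ.1 j1') (θ.2.1 j2')) ≤ D1 ∧
            d2 s2 (g2 (θ.1 j1') (θ.2.1 j2')) ≤ D2) := by
    intro m1 m2
    have hdec : ∀ (r1 : R1) (r2 : R2),
        (decC qS qU1 qU2 g1 g2 J1 J2 M1 M2 hJ1 hJ2 θ (m1, m2)).p (r1, r2) *
          ind (d1 s1 r1 ≤ D1 ∧ d2 s2 r2 ≤ D2)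
        = ∑ j1', ∑ j2', ind (g1 (θ.1 j1') (θ.2.1 j2') = r1) *
            (ind (g2 (θ.1 j1') (θ.2.1 j2') = r2) *
              (dHat qS qU1 qU2 J1 J2 M1 M2 θ (m1, m2) j1' j2' *
                ind (d1 s1 r1 ≤ D1 ∧ d2 s2 r2 ≤ D2))) := by
      intro r1 r2
      show (∑ j1', ∑ j2', dHat qS qU1 qU2 J1 J2 M1 M2 θ (m1, m2) j1' j2' *
          (ind (g1 (θ.1 j1') (θ.2.1 j2') = r1) * ind (g2 (θ.1 j1') (θ.2.1 j2') = r2))) *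
            ind (d1 s1 r1 ≤ D1 ∧ d2 s2 r2 ≤ D2) = _
      rw [Finset.sum_mul]
      refine Finset.sum_congr rfl fun j1' _ => ?_
      rw [Finset.sum_mul]
      refine Finset.sum_congr rfl fun j2' _ => ?_
      ring
    rw [Finset.sum_congr rfl fun r1 _ => Finset.sum_congr rfl fun r2 _ => hdec r1 r2]
    rw [sum_swap_rj (fun r1 r2 j1' j2' => ind (g1 (θ.1 j1') (θ.2.1 j2') = r1) *
      (ind (g2 (θ.1 j1') (θ.2.1 j2') = r2) *
        (dHat qS qU1 qU2 J1 J2 M1 M2 θ (m1, m2) j1' j2' *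
          ind (d1 s1 r1 ≤ D1 ∧ d2 s2 r2 ≤ D2))))]
    refine Finset.sum_congr rfl fun j1' _ => Finset.sum_congr rfl fun j2' _ => ?_
    have hin : ∀ r1 : R1, ∑ r2 : R2, ind (g2 (θ.1 j1') (θ.2.1 j2') = r2) *
        (dHat qS qU1 qU2 J1 J2 M1 M2 θ (m1, m2) j1' j2' *
          ind (d1 s1 r1 ≤ D1 ∧ d2 s2 r2 ≤ D2))
        = dHat qS qU1 qU2 J1 J2 M1 M2 θ (m1, m2) j1' j2' *
          ind (d1 s1 r1 ≤ D1 ∧ d2 s2 (g2 (θ.1 j1') (θ.2.1 j2')) ≤ D2) := by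
      intro r1
      exact sum_ind_mul (g2 (θ.1 j1') (θ.2.1 j2')) (fun r2 =>
        dHat qS qU1 qU2 J1 J2 M1 M2 θ (m1, m2) j1' j2' *
          ind (d1 s1 r1 ≤ D1 ∧ d2 s2 r2 ≤ D2))
    calc ∑ r1 : R1, ∑ r2 : R2, ind (g1 (θ.1 j1') (θ.2.1 j2') = r1) *
          (ind (g2 (θ.1 j1') (θ.2.1 j2') = r2) *
            (dHat qS qU1 qU2 J1 J2 M1 M2 θ (m1, m2) j1' j2' *
              ind (d1 s1 r1 ≤ D1 ∧ d2 s2 r2 ≤ D2)))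
        = ∑ r1 : R1, ind (g1 (θ.1 j1') (θ.2.1 j2') = r1) *
            (∑ r2 : R2, ind (g2 (θ.1 j1') (θ.2.1 j2') = r2) *
              (dHat qS qU1 qU2 J1 J2 M1 M2 θ (m1, m2) j1' j2' *
                ind (d1 s1 r1 ≤ D1 ∧ d2 s2 r2 ≤ D2))) := by
          refine Finset.sum_congr rfl fun r1 _ => ?_
          rw [← Finset.mul_sum]
      _ = ∑ r1 : R1, ind (g1 (θ.1 j1') (θ.2.1 j2') = r1) *
            (dHat qS qU1 qU2 J1 J2 M1 M2 θ (m1, m2) j1' j2' *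
              ind (d1 s1 r1 ≤ D1 ∧ d2 s2 (g2 (θ.1 j1') (θ.2.1 j2')) ≤ D2)) :=
          Finset.sum_congr rfl fun r1 _ => by rw [hin r1]
      _ = dHat qS qU1 qU2 J1 J2 M1 M2 θ (m1, m2) j1' j2' *
            ind (d1 s1 (g1 (θ.1 j1') (θ.2.1 j2')) ≤ D1 ∧
              d2 s2 (g2 (θ.1 j1') (θ.2.1 j2')) ≤ D2) :=
          sum_ind_mul (g1 (θ.1 j1') (θ.2.1 j2')) (fun r1 =>
            dHat qS qU1 qU2 J1 J2 M1 M2 θ (m1, m2) j1' j2' *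
              ind (d1 s1 r1 ≤ D1 ∧ d2 s2 (g2 (θ.1 j1') (θ.2.1 j2')) ≤ D2))
  -- Step I : pull out the constants
  have hpull : ∀ (m1 : Fin M1) (m2 : Fin M2),
      (∑ r1 : R1, ∑ r2 : R2, qS.p (s1, s2) * (encC1 qS qU1 J1 J2 M1 M2 hJ1 θ s1).p m1 *
        (encC2 qS qU2 J1 J2 M1 M2 hJ2 θ s2).p m2 *
        (decC qS qU1 qU2 g1 g2 J1 J2 M1 M2 hJ1 hJ2 θ (m1, m2)).p (r1, r2) *
        ind (d1 s1 r1 ≤ D1 ∧ d2 s2 r2 ≤ D2))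
      = qS.p (s1, s2) * ((encC1 qS qU1 J1 J2 M1 M2 hJ1 θ s1).p m1 *
          ((encC2 qS qU2 J1 J2 M1 M2 hJ2 θ s2).p m2 *
            (∑ r1, ∑ r2, (decC qS qU1 qU2 g1 g2 J1 J2 M1 M2 hJ1 hJ2 θ (m1, m2)).p (r1, r2) *
              ind (d1 s1 r1 ≤ D1 ∧ d2 s2 r2 ≤ D2)))) := by
    intro m1 m2
    have h1 : ∀ (r1 : R1) (r2 : R2), qS.p (s1, s2) * (encC1 qS qU1 J1 J2 M1 M2 hJ1 θ s1).p m1 *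
        (encC2 qS qU2 J1 J2 M1 M2 hJ2 θ s2).p m2 *
        (decC qS qU1 qU2 g1 g2 J1 J2 M1 M2 hJ1 hJ2 θ (m1, m2)).p (r1, r2) *
        ind (d1 s1 r1 ≤ D1 ∧ d2 s2 r2 ≤ D2)
        = (qS.p (s1, s2) * ((encC1 qS qU1 J1 J2 M1 M2 hJ1 θ s1).p m1 *
            (encC2 qS qU2 J1 J2 M1 M2 hJ2 θ s2).p m2)) *
          ((decC qS qU1 qU2 g1 g2 J1 J2 M1 M2 hJ1 hJ2 θ (m1, m2)).p (r1, r2) *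
            ind (d1 s1 r1 ≤ D1 ∧ d2 s2 r2 ≤ D2)) := fun r1 r2 => by ring
    rw [Finset.sum_congr rfl fun r1 _ => Finset.sum_congr rfl fun r2 _ => h1 r1 r2]
    simp_rw [← Finset.mul_sum]
    ring
  rw [Finset.sum_congr rfl (fun (m1 : Fin M1) (_ : m1 ∈ univ) =>
    Finset.sum_congr rfl (fun (m2 : Fin M2) (_ : m2 ∈ univ) => by rw [hpull m1 m2, hT m1 m2]))]
  -- pull q out of the m sums
  rw [show (∑ m1, ∑ m2, qS.p (s1, s2) * ((encC1 qS qU1 J1 J2 M1 M2 hJ1 θ s1).p m1 *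
      ((encC2 qS qU2 J1 J2 M1 M2 hJ2 θ s2).p m2 *
        (∑ j1', ∑ j2', dHat qS qU1 qU2 J1 J2 M1 M2 θ (m1, m2) j1' j2' *
          ind (d1 s1 (g1 (θ.1 j1') (θ.2.1 j2')) ≤ D1 ∧
            d2 s2 (g2 (θ.1 j1') (θ.2.1 j2')) ≤ D2)))))
      = qS.p (s1, s2) * ∑ m1, ∑ m2, ((encC1 qS qU1 J1 J2 M1 M2 hJ1 θ s1).p m1 *
          ((encC2 qS qU2 J1 J2 M1 M2 hJ2 θ s2).p m2 *
            (∑ j1', ∑ j2', dHat qS qU1 qU2 J1 J2 M1 M2 θ (m1, m2) j1' j2' *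
              ind (d1 s1 (g1 (θ.1 j1') (θ.2.1 j2')) ≤ D1 ∧
                d2 s2 (g2 (θ.1 j1') (θ.2.1 j2')) ≤ D2)))) from by
    simp_rw [← Finset.mul_sum]]
  apply mul_le_mul_of_nonneg_left _ (qS.nonneg (s1, s2))
  -- apply the abstract code lemma
  have key := code_inner (θ.2.2.1) (θ.2.2.2)
    (fun j1 => ra qS qU1 s1 (θ.1 j1) / Z1 qS qU1 J1 s1 θ.1)
    (fun j1 => eHat1 qS qU1 J1 J2 M1 M2 θ s1 j1)
    (fun j2 => rb qS qU2 s2 (θ.2.1 j2) / Z2 qS qU2 J2 s2 θ.2.1)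
    (fun j2 => eHat2 qS qU2 J1 J2 M1 M2 θ s2 j2)
    (fun n j1 j2 => dHat qS qU1 qU2 J1 J2 M1 M2 θ n j1 j2)
    (fun j1 j2 => rc qS qU1 qU2 (θ.1 j1) (θ.2.1 j2) / Wt qS qU1 qU2 J1 J2 M1 M2 θ j1 j2)
    (fun j1 j2 => ind (d1 s1 (g1 (θ.1 j1) (θ.2.1 j2)) ≤ D1 ∧
      d2 s2 (g2 (θ.1 j1) (θ.2.1 j2)) ≤ D2))
    (fun j => div_nonneg (ra_nonneg qS qU1 s1 _) (Z1_nonneg qS qU1 J1 s1 θ.1))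
    (fun j => e1_le_eHat1 qS qU1 J1 J2 M1 M2 θ s1 j)
    (fun j => div_nonneg (rb_nonneg qS qU2 s2 _) (Z2_nonneg qS qU2 J2 s2 θ.2.1))
    (fun j => e2_le_eHat2 qS qU2 J1 J2 M1 M2 θ s2 j)
    (fun n j1 j2 => dHat_nonneg qS qU1 qU2 J1 J2 M1 M2 θ n j1 j2)
    (fun j1 j2 => div_nonneg (rc_nonneg qS qU1 qU2 _ _)
      (Wt_nonneg qS qU1 qU2 J1 J2 M1 M2 θ j1 j2))
    (fun j1 j2 => d_le_dHat qS qU1 qU2 J1 J2 M1 M2 θ j1 j2)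
    (fun j1 j2 => ind_nonneg _)
  calc ∑ j1, ∑ j2, CoreF qS qU1 qU2 J1 J2 M1 M2 s1 s2 j1 j2 θ *
        ind (d1 s1 (g1 (θ.1 j1) (θ.2.1 j2)) ≤ D1 ∧ d2 s2 (g2 (θ.1 j1) (θ.2.1 j2)) ≤ D2)
      = ∑ j1, ∑ j2, (ra qS qU1 s1 (θ.1 j1) / Z1 qS qU1 J1 s1 θ.1) *
          (rb qS qU2 s2 (θ.2.1 j2) / Z2 qS qU2 J2 s2 θ.2.1) *
          ((rc qS qU1 qU2 (θ.1 j1) (θ.2.1 j2) / Wt qS qU1 qU2 J1 J2 M1 M2 θ j1 j2) *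
            ind (d1 s1 (g1 (θ.1 j1) (θ.2.1 j2)) ≤ D1 ∧
              d2 s2 (g2 (θ.1 j1) (θ.2.1 j2)) ≤ D2)) := by
        refine Finset.sum_congr rfl fun j1 _ => Finset.sum_congr rfl fun j2 _ => ?_
        unfold CoreF
        ring
    _ ≤ ∑ m1, ∑ m2, ((encC1 qS qU1 J1 J2 M1 M2 hJ1 θ s1).p m1 *
          ((encC2 qS qU2 J1 J2 M1 M2 hJ2 θ s2).p m2 *
            (∑ j1', ∑ j2', dHat qS qU1 qU2 J1 J2 M1 M2 θ (m1, m2) j1' j2' *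
              ind (d1 s1 (g1 (θ.1 j1')  (θ.2.1 j2')) ≤ D1 ∧
                d2 s2 (g2 (θ.1 j1') (θ.2.1 j2')) ≤ D2)))) := key

end finalparts
end BTaux
/-- One-shot Berger–Tung achievability. -/
theorem oneShot_berger_tung (qS : FinPMF (S1 × S2)) (qU1 : S1 → FinPMF U1)
    (qU2 : S2 → FinPMF U2) (d1 : S1 → R1 → ℝ) (d2 : S2 → R2 → ℝ)
    (hd1 : ∀ s r, 0 ≤ d1 s r) (hd2 : ∀ s r, 0 ≤ d2 s r)
    (D1 D2 : ℝ) (hD1 : 0 ≤ D1) (hD2 : 0 ≤ D2)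
    (g1 : U1 → U2 → R1) (g2 : U1 → U2 → R2)
    (M1 M2 J1 J2 : ℕ) (hM1 : 1 ≤ M1) (hM2 : 1 ≤ M2) (hJ1 : M1 ≤ J1) (hJ2 : M2 ≤ J2) :
    ∃ (enc1 : S1 → FinPMF (Fin M1)) (enc2 : S2 → FinPMF (Fin M2))
      (dec : Fin M1 × Fin M2 → FinPMF (R1 × R2)),
      pNoExcessBT M1 M2 qS d1 d2 D1 D2 enc1 enc2 dec ≥
        ∑ s1 : S1, ∑ s2 : S2, ∑ u1 : U1, ∑ u2 : U2,
          qBT qS qU1 qU2 s1 s2 u1 u2 *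
          ind (d1 s1 (g1 u1 u2) ≤ D1 ∧ d2 s2 (g2 u1 u2) ≤ D2) *
          ((1 + (J1 : ℝ)⁻¹ * (2 : ℝ) ^ (iS1U1 qS qU1 s1 u1)) *
           (1 + (J2 : ℝ)⁻¹ * (2 : ℝ) ^ (iS2U2 qS qU2 s2 u2)) *
           (1 + ((J2 : ℝ) * (M2 : ℝ)⁻¹ + (J1 : ℝ) * (M1 : ℝ)⁻¹ +
                 (J1 : ℝ) * (J2 : ℝ) * ((M1 : ℝ) * (M2 : ℝ))⁻¹) *
                (2 : ℝ) ^ (-(iU1U2 qS qU1 qU2 u1 u2))))⁻¹ := by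
  classical
  have hJ1' : 1 ≤ J1 := le_trans hM1 hJ1
  have hJ2' : 1 ≤ J2 := le_trans hM2 hJ2
  have hS : Nonempty (S1 × S2) := by
    by_contra h
    rw [not_nonempty_iff] at h
    have h1 := qS.sum_eq_one
    rw [Finset.univ_eq_empty, Finset.sum_empty] at h1
    norm_num at h1
  obtain ⟨s0⟩ := hS
  have hU1 : Nonempty U1 := by
    by_contra h
    rw [not_nonempty_iff] at h
    have h1 := (qU1 s0.1).sum_eq_one
    rw [Finset.univ_eq_empty, Finset.sum_empty] at h1
    norm_num at h1
  have hU2 : Nonempty U2 := by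
    by_contra h
    rw [not_nonempty_iff] at h
    have h1 := (qU2 s0.2).sum_eq_one
    rw [Finset.univ_eq_empty, Finset.sum_empty] at h1
    norm_num at h1
  obtain ⟨u10⟩ := hU1
  obtain ⟨u20⟩ := hU2
  haveI hΩ : Nonempty (BTaux.Om U1 U2 J1 J2 M1 M2) :=
    ⟨(fun _ => u10, fun _ => u20, fun _ => ⟨0, hM1⟩, fun _ => ⟨0, hM2⟩)⟩
  obtain ⟨θ, _, hmax⟩ := Finset.exists_max_image
    (Finset.univ : Finset (BTaux.Om U1 U2 J1 J2 M1 M2))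
    (BTaux.Ftil qS qU1 qU2 d1 d2 D1 D2 g1 g2 J1 J2 M1 M2) Finset.univ_nonempty
  refine ⟨BTaux.encC1 qS qU1 J1 J2 M1 M2 hJ1' θ, BTaux.encC2 qS qU2 J1 J2 M1 M2 hJ2' θ,
    BTaux.decC qS qU1 qU2 g1 g2 J1 J2 M1 M2 hJ1' hJ2' θ, ?_⟩
  have h1 := BTaux.RHS_le_ExpectFtil qS qU1 qU2 d1 d2 D1 D2 g1 g2 J1 J2 M1 M2 hM1 hM2 hJ1' hJ2'
  have h2 : BTaux.Expect qS qU1 qU2 J1 J2 M1 M2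
      (BTaux.Ftil qS qU1 qU2 d1 d2 D1 D2 g1 g2 J1 J2 M1 M2)
      ≤ BTaux.Ftil qS qU1 qU2 d1 d2 D1 D2 g1 g2 J1 J2 M1 M2 θ := by
    unfold BTaux.Expect
    calc ∑ θ' : BTaux.Om U1 U2 J1 J2 M1 M2, BTaux.muBT qS qU1 qU2 J1 J2 M1 M2 θ' *
          BTaux.Ftil qS qU1 qU2 d1 d2 D1 D2 g1 g2 J1 J2 M1 M2 θ'
        ≤ ∑ θ' : BTaux.Om U1 U2 J1 J2 M1 M2, BTaux.muBT qS qU1 qU2 J1 J2 M1 M2 θ' *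
          BTaux.Ftil qS qU1 qU2 d1 d2 D1 D2 g1 g2 J1 J2 M1 M2 θ :=
          Finset.sum_le_sum fun θ' _ =>
            mul_le_mul_of_nonneg_left (hmax θ' (Finset.mem_univ θ'))
              (BTaux.muBT_nonneg qS qU1 qU2 J1 J2 M1 M2 θ')
      _ = (∑ θ' : BTaux.Om U1 U2 J1 J2 M1 M2, BTaux.muBT qS qU1 qU2 J1 J2 M1 M2 θ') *
          BTaux.Ftil qS qU1 qU2 d1 d2 D1 D2 g1 g2 J1 J2 M1 M2 θ := (Finset.sum_mul _ _ _).symm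
      _ = BTaux.Ftil qS qU1 qU2 d1 d2 D1 D2 g1 g2 J1 J2 M1 M2 θ := by
          rw [BTaux.sum_muBT qS qU1 qU2 J1 J2 M1 M2 hM1 hM2, one_mul]
  have h3 := BTaux.Ftil_le_pNoExcess qS qU1 qU2 d1 d2 D1 D2 g1 g2 J1 J2 M1 M2 hJ1' hJ2' θ
  exact le_trans (le_trans h1 h2) h3
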